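/- arXiv:math/9306209 — 6 statements merged into one kernel-verified Lean document; each statement's English description precedes it below -/
import Mathlib

section
/- Let M = Fin m, N = Fin n with positive weights μ, ν, and t > 0. For matrices b, c : M × N → ℝ and any subsets E ⊆ M, F ⊆ N, one has ∑_{(i,j)∈E×F} |b(i,j)+c(i,j)| μ_i ν_j ≤ (μ(E) ∨ t⁻¹ ν(F)) · ( max_i ∑_j |b(i,j)| ν_j + t · max_j ∑_i |c(i,j)| μ_i ), where u ∨ v denotes the maximum. -/
open Finset

/-- for matrices `b, c`, the weighted ℓ¹-norm of `b + c` over `E × F`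
is bounded by `(μ(E) ∨ t⁻¹ν(F)) · (‖b‖ + t‖cᵀ‖)`. -/
theorem l1_restriction_sum_le (m n : ℕ) (μ : Fin m → ℝ) (ν : Fin n → ℝ)
    (hμ : ∀ i, 0 < μ i) (hν : ∀ j, 0 < ν j) (t : ℝ) (ht : 0 < t)
    (b c : Fin m × Fin n → ℝ) (E : Finset (Fin m)) (F : Finset (Fin n)) :
    ∑ i ∈ E, ∑ j ∈ F, |b (i, j) + c (i, j)| * μ i * ν j ≤
      max (∑ i ∈ E, μ i) (t⁻¹ * ∑ j ∈ F, ν j) *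
        ((⨆ i : Fin m, ∑ j : Fin n, |b (i, j)| * ν j) +
          t * ⨆ j : Fin n, ∑ i : Fin m, |c (i, j)| * μ i) := by
  set B := ⨆ i : Fin m, ∑ j : Fin n, |b (i, j)| * ν j with hB
  set C := ⨆ j : Fin n, ∑ i : Fin m, |c (i, j)| * μ i with hC
  set K := max (∑ i ∈ E, μ i) (t⁻¹ * ∑ j ∈ F, ν j) with hK
  have hBdd1 : BddAbove (Set.range fun i : Fin m => ∑ j : Fin n, |b (i, j)| * ν j) :=
    Set.Finite.bddAbove (Set.finite_range _)
  have hBdd2 : BddAbove (Set.range fun j : Fin n => ∑ i : Fin m, |c (i, j)| * μ i) :=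
    Set.Finite.bddAbove (Set.finite_range _)
  have hBi : ∀ i : Fin m, ∑ j : Fin n, |b (i, j)| * ν j ≤ B := fun i => le_ciSup hBdd1 i
  have hCj : ∀ j : Fin n, ∑ i : Fin m, |c (i, j)| * μ i ≤ C := fun j => le_ciSup hBdd2 j
  have hB0 : 0 ≤ B := by
    rcases isEmpty_or_nonempty (Fin m) with h | h
    · simp [hB, Real.iSup_of_isEmpty]
    · exact le_trans (Finset.sum_nonneg fun j _ => mul_nonneg (abs_nonneg _) (hν j).le)
        (hBi h.some)
  have hC0 : 0 ≤ C := by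
    rcases isEmpty_or_nonempty (Fin n) with h | h
    · simp [hC, Real.iSup_of_isEmpty]
    · exact le_trans (Finset.sum_nonneg fun i _ => mul_nonneg (abs_nonneg _) (hμ i).le)
        (hCj h.some)
  have hK0 : 0 ≤ K :=
    le_trans (Finset.sum_nonneg fun i _ => (hμ i).le) (le_max_left _ _)
  have hFB : ∀ i : Fin m, ∑ j ∈ F, |b (i, j)| * ν j ≤ B := fun i =>
    le_trans (Finset.sum_le_sum_of_subset_of_nonneg (Finset.subset_univ F)
      (fun j _ _ => mul_nonneg (abs_nonneg _) (hν j).le)) (hBi i)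
  have hEC : ∀ j : Fin n, ∑ i ∈ E, |c (i, j)| * μ i ≤ C := fun j =>
    le_trans (Finset.sum_le_sum_of_subset_of_nonneg (Finset.subset_univ E)
      (fun i _ _ => mul_nonneg (abs_nonneg _) (hμ i).le)) (hCj j)
  have step1 : ∑ i ∈ E, ∑ j ∈ F, |b (i, j) + c (i, j)| * μ i * ν j ≤
      (∑ i ∈ E, ∑ j ∈ F, |b (i, j)| * μ i * ν j) +
      (∑ i ∈ E, ∑ j ∈ F, |c (i, j)| * μ i * ν j) := by
    rw [← Finset.sum_add_distrib]
    refine Finset.sum_le_sum fun i _ => ?_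
    rw [← Finset.sum_add_distrib]
    refine Finset.sum_le_sum fun j _ => ?_
    have := abs_add_le (b (i, j)) (c (i, j))
    nlinarith [(hμ i).le, (hν j).le, mul_nonneg (hμ i).le (hν j).le]
  have t1 : ∑ i ∈ E, ∑ j ∈ F, |b (i, j)| * μ i * ν j ≤ K * B := by
    have : ∑ i ∈ E, ∑ j ∈ F, |b (i, j)| * μ i * ν j
        = ∑ i ∈ E, μ i * ∑ j ∈ F, |b (i, j)| * ν j := by
      refine Finset.sum_congr rfl fun i _ => ?_
      rw [Finset.mul_sum]; exact Finset.sum_congr rfl fun j _ => by ring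
    rw [this]
    calc ∑ i ∈ E, μ i * ∑ j ∈ F, |b (i, j)| * ν j
        ≤ ∑ i ∈ E, μ i * B :=
          Finset.sum_le_sum fun i _ => mul_le_mul_of_nonneg_left (hFB i) (hμ i).le
      _ = (∑ i ∈ E, μ i) * B := by rw [Finset.sum_mul]
      _ ≤ K * B := mul_le_mul_of_nonneg_right (le_max_left _ _) hB0
  have t2 : ∑ i ∈ E, ∑ j ∈ F, |c (i, j)| * μ i * ν j ≤ K * (t * C) := by
    rw [Finset.sum_comm]
    have : ∑ j ∈ F, ∑ i ∈ E, |c (i, j)| * μ i * ν j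
        = ∑ j ∈ F, ν j * ∑ i ∈ E, |c (i, j)| * μ i := by
      refine Finset.sum_congr rfl fun j _ => ?_
      rw [Finset.mul_sum]; exact Finset.sum_congr rfl fun i _ => by ring
    rw [this]
    have hνF : ∑ j ∈ F, ν j ≤ t * K := by
      have h1 : t⁻¹ * ∑ j ∈ F, ν j ≤ K := le_max_right _ _
      calc ∑ j ∈ F, ν j = t * (t⁻¹ * ∑ j ∈ F, ν j) := by field_simp
        _ ≤ t * K := mul_le_mul_of_nonneg_left h1 ht.le
    calc ∑ j ∈ F, ν j * ∑ i ∈ E, |c (i, j)| * μ i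
        ≤ ∑ j ∈ F, ν j * C :=
          Finset.sum_le_sum fun j _ => mul_le_mul_of_nonneg_left (hEC j) (hν j).le
      _ = (∑ j ∈ F, ν j) * C := by rw [Finset.sum_mul]
      _ ≤ (t * K) * C := mul_le_mul_of_nonneg_right hνF hC0
      _ = K * (t * C) := by ring
  calc ∑ i ∈ E, ∑ j ∈ F, |b (i, j) + c (i, j)| * μ i * ν j
      ≤ _ + _ := step1
    _ ≤ K * B + K * (t * C) := add_le_add t1 t2
    _ = K * (B + t * C) := by ring
end

section
/- Let M = Fin m, N = Fin n with positive weights μ, ν, and t > 0. Define |||a|||_t = sup over nonempty E ⊆ M, F ⊆ N of (μ(E) ∨ t⁻¹ν(F))⁻¹ ∑_{(i,j)∈E×F} |a(i,j)| μ_i ν_j. If |||a|||_t ≤ 1, then M × N can be partitioned into disjoint sets A and B such that max_i ∑_{j : (i,j)∈A} |a(i,j)| ν_j ≤ 1 and max_j ∑_{i : (i,j)∈B} |a(i,j)| μ_i ≤ 1/t. -/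
open Finset

theorem splitting_aux (m n : ℕ) (μ : Fin m → ℝ) (ν : Fin n → ℝ)
    (hμ : ∀ i, 0 < μ i) (hν : ∀ j, 0 < ν j) (t : ℝ) (ht : 0 < t)
    (a : Fin m × Fin n → ℝ)
    (ha : ∀ (E : Finset (Fin m)) (F : Finset (Fin n)), E.Nonempty → F.Nonempty →
      (max (∑ i ∈ E, μ i) (t⁻¹ * ∑ j ∈ F, ν j))⁻¹ *
        ∑ i ∈ E, ∑ j ∈ F, |a (i, j)| * μ i * ν j ≤ 1) :
    ∀ k (R : Finset (Fin m)) (C : Finset (Fin n)), R.card + C.card ≤ k →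
    ∃ A B : Finset (Fin m × Fin n), Disjoint A B ∧ A ∪ B = R ×ˢ C ∧
      (∀ i, ∑ j ∈ C, (if (i, j) ∈ A then |a (i, j)| * ν j else 0) ≤ 1) ∧
      (∀ j, ∑ i ∈ R, (if (i, j) ∈ B then |a (i, j)| * μ i else 0) ≤ 1 / t) := by
  intro k
  induction k with
  | zero =>
    intro R C h
    have hR : R = ∅ := Finset.card_eq_zero.mp (by omega)
    refine ⟨∅, ∅, disjoint_empty_left _, by simp [hR], by simp,
      fun j => by simp; positivity⟩
  | succ k ih =>
    intro R C hcard
    rcases eq_or_ne R ∅ with hR | hR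
    · refine ⟨∅, ∅, disjoint_empty_left _, by simp [hR], by simp,
        fun j => by simp; positivity⟩
    rcases eq_or_ne C ∅ with hC | hC
    · refine ⟨∅, ∅, disjoint_empty_left _, by simp [hC], by simp [hC],
        fun j => by simp; positivity⟩
    have hRne : R.Nonempty := Finset.nonempty_of_ne_empty hR
    have hCne : C.Nonempty := Finset.nonempty_of_ne_empty hC
    by_cases hrow : ∃ i ∈ R, ∑ j ∈ C, |a (i, j)| * ν j ≤ 1
    · obtain ⟨i, hiR, hlight⟩ := hrow
      obtain ⟨A', B', hdisj, hunion, hrows, hcols⟩ := ih (R.erase i) C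
        (by have := Finset.card_erase_lt_of_mem hiR; omega)
      have hA'sub : A' ⊆ (R.erase i) ×ˢ C := hunion ▸ Finset.subset_union_left
      have hB'sub : B' ⊆ (R.erase i) ×ˢ C := hunion ▸ Finset.subset_union_right
      refine ⟨A' ∪ {i} ×ˢ C, B', ?_, ?_, ?_, ?_⟩
      · refine Finset.disjoint_union_left.mpr ⟨hdisj, ?_⟩
        refine Finset.disjoint_left.mpr fun p hp hpB => ?_
        have := hB'sub hpB
        simp only [Finset.mem_product, Finset.mem_singleton, Finset.mem_erase] at hp this
        exact this.1.1 hp.1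
      · rw [Finset.union_right_comm, hunion, ← Finset.union_product,
          Finset.union_comm, ← Finset.insert_eq, Finset.insert_erase hiR]
      · intro i'
        rcases eq_or_ne i' i with rfl | hne
        · calc ∑ j ∈ C, (if (i', j) ∈ A' ∪ {i'} ×ˢ C then |a (i', j)| * ν j else 0)
              ≤ ∑ j ∈ C, |a (i', j)| * ν j := by
                refine Finset.sum_le_sum fun j hj => ?_
                split
                · exact le_rfl
                · exact mul_nonneg (abs_nonneg _) (hν j).le
            _ ≤ 1 := hlight
        · have : ∀ j ∈ C, (if (i', j) ∈ A' ∪ {i} ×ˢ C then |a (i', j)| * ν j else 0)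
              = (if (i', j) ∈ A' then |a (i', j)| * ν j else 0) := by
            intro j hj
            refine if_congr ?_ rfl rfl
            simp only [Finset.mem_union, Finset.mem_product, Finset.mem_singleton]
            constructor
            · rintro (h | h)
              · exact h
              · exact absurd h.1 hne
            · exact Or.inl
          rw [Finset.sum_congr rfl this]
          exact hrows i'
      · intro j
        have : ∑ i' ∈ R, (if (i', j) ∈ B' then |a (i', j)| * μ i' else 0)
            = ∑ i' ∈ R.erase i, (if (i', j) ∈ B' then |a (i', j)| * μ i' else 0) := by
          rw [← Finset.sum_erase_add R _ hiR]
          have : (i, j) ∉ B' := fun h => by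
            have := hB'sub h
            simp only [Finset.mem_product, Finset.mem_erase] at this
            exact this.1.1 rfl
          simp [this]
        rw [this]; exact hcols j
    by_cases hcol : ∃ j ∈ C, ∑ i ∈ R, |a (i, j)| * μ i ≤ 1 / t
    · obtain ⟨j, hjC, hlight⟩ := hcol
      obtain ⟨A', B', hdisj, hunion, hrows, hcols⟩ := ih R (C.erase j)
        (by have := Finset.card_erase_lt_of_mem hjC; omega)
      have hA'sub : A' ⊆ R ×ˢ (C.erase j) := hunion ▸ Finset.subset_union_left
      have hB'sub : B' ⊆ R ×ˢ (C.erase j) := hunion ▸ Finset.subset_union_right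
      refine ⟨A', B' ∪ R ×ˢ {j}, ?_, ?_, ?_, ?_⟩
      · refine Finset.disjoint_union_right.mpr ⟨hdisj, ?_⟩
        refine Finset.disjoint_left.mpr fun p hp hpB => ?_
        have := hA'sub hp
        simp only [Finset.mem_product, Finset.mem_singleton, Finset.mem_erase] at hpB this
        exact this.2.1 hpB.2
      · rw [← Finset.union_assoc, hunion, ← Finset.product_union,
          Finset.union_comm (C.erase j), ← Finset.insert_eq, Finset.insert_erase hjC]
      · intro i
        have : ∑ j' ∈ C, (if (i, j') ∈ A' then |a (i, j')| * ν j' else 0)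
            = ∑ j' ∈ C.erase j, (if (i, j') ∈ A' then |a (i, j')| * ν j' else 0) := by
          rw [← Finset.sum_erase_add C _ hjC]
          have : (i, j) ∉ A' := fun h => by
            have := hA'sub h
            simp only [Finset.mem_product, Finset.mem_erase] at this
            exact this.2.1 rfl
          simp [this]
        rw [this]; exact hrows i
      · intro j'
        rcases eq_or_ne j' j with rfl | hne
        · calc ∑ i ∈ R, (if (i, j') ∈ B' ∪ R ×ˢ {j'} then |a (i, j')| * μ i else 0)
              ≤ ∑ i ∈ R, |a (i, j')| * μ i := by
                refine Finset.sum_le_sum fun i hi => ?_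
                split
                · exact le_rfl
                · exact mul_nonneg (abs_nonneg _) (hμ i).le
            _ ≤ 1 / t := hlight
        · have : ∀ i ∈ R, (if (i, j') ∈ B' ∪ R ×ˢ {j} then |a (i, j')| * μ i else 0)
              = (if (i, j') ∈ B' then |a (i, j')| * μ i else 0) := by
            intro i hi
            refine if_congr ?_ rfl rfl
            simp only [Finset.mem_union, Finset.mem_product, Finset.mem_singleton]
            constructor
            · rintro (h | h)
              · exact h
              · exact absurd h.2 hne
            · exact Or.inl
          rw [Finset.sum_congr rfl this]
          exact hcols j'
    · exfalso
      push_neg at hrow hcol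
      set S := ∑ i ∈ R, ∑ j ∈ C, |a (i, j)| * μ i * ν j with hS
      have h1 : ∑ i ∈ R, μ i < S := by
        rw [hS]
        refine Finset.sum_lt_sum_of_nonempty hRne fun i hi => ?_
        have := hrow i hi
        calc μ i = μ i * 1 := by ring
          _ < μ i * ∑ j ∈ C, |a (i, j)| * ν j := by
              exact (mul_lt_mul_iff_right₀ (hμ i)).mpr this
          _ = ∑ j ∈ C, |a (i, j)| * μ i * ν j := by
              rw [Finset.mul_sum]; exact Finset.sum_congr rfl fun j hj => by ring
      have h2 : t⁻¹ * ∑ j ∈ C, ν j < S := by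
        have : S = ∑ j ∈ C, ∑ i ∈ R, |a (i, j)| * μ i * ν j := Finset.sum_comm
        rw [this, Finset.mul_sum]
        refine Finset.sum_lt_sum_of_nonempty hCne fun j hj => ?_
        have := hcol j hj
        calc t⁻¹ * ν j = ν j * (1 / t) := by ring
          _ < ν j * ∑ i ∈ R, |a (i, j)| * μ i := by
              exact (mul_lt_mul_iff_right₀ (hν j)).mpr this
          _ = ∑ i ∈ R, |a (i, j)| * μ i * ν j := by
              rw [Finset.mul_sum]; exact Finset.sum_congr rfl fun i hi => by ring
      have hmaxpos : 0 < max (∑ i ∈ R, μ i) (t⁻¹ * ∑ j ∈ C, ν j) :=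
        lt_max_of_lt_left (Finset.sum_pos (fun i _ => hμ i) hRne)
      have := ha R C hRne hCne
      rw [inv_mul_le_iff₀ hmaxpos, mul_one] at this
      have : S < S := lt_of_le_of_lt this (max_lt h1 h2)
      exact lt_irrefl _ this

/-- Proposition 1.1, splitting part: if `|||a|||_t ≤ 1`, i.e. for all
nonempty `E, F` the quantity `(μ(E) ∨ t⁻¹ν(F))⁻¹ ∑_{E×F} |a| μ ν` is at most `1`,
then `M × N` splits into `A ∪ B` with row sums of `1_A·a` at most `1` and column
sums of `1_B·a` at most `1/t`. -/
theorem splitting_lemma (m n : ℕ) (μ : Fin m → ℝ) (ν : Fin n → ℝ)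
    (hμ : ∀ i, 0 < μ i) (hν : ∀ j, 0 < ν j) (t : ℝ) (ht : 0 < t)
    (a : Fin m × Fin n → ℝ)
    (ha : ∀ (E : Finset (Fin m)) (F : Finset (Fin n)), E.Nonempty → F.Nonempty →
      (max (∑ i ∈ E, μ i) (t⁻¹ * ∑ j ∈ F, ν j))⁻¹ *
        ∑ i ∈ E, ∑ j ∈ F, |a (i, j)| * μ i * ν j ≤ 1) :
    ∃ A B : Finset (Fin m × Fin n), Disjoint A B ∧ A ∪ B = Finset.univ ∧
      (∀ i : Fin m, ∑ j : Fin n, (if (i, j) ∈ A then |a (i, j)| * ν j else 0) ≤ 1) ∧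
      (∀ j : Fin n, ∑ i : Fin m, (if (i, j) ∈ B then |a (i, j)| * μ i else 0) ≤ 1 / t) := by
  obtain ⟨A, B, h1, h2, h3, h4⟩ := splitting_aux m n μ ν hμ hν t ht a ha
    (Finset.univ.card + (Finset.univ : Finset (Fin n)).card) Finset.univ Finset.univ le_rfl
  exact ⟨A, B, h1, by simpa using h2, h3, h4⟩
end

section
/- Let M = Fin m, N = Fin n with positive weights μ, ν, and t > 0. Let K_t(a) = inf { max_i ∑_j |b(i,j)| ν_j + t · max_j ∑_i |c(i,j)| μ_i : a = b + c } be the K_t-functional of the couple (ℓ^∞_m(ℓ^1_n), ℓ^∞_n(ℓ^1_m)), and |||a|||_t = sup_{E,F} (μ(E) ∨ t⁻¹ν(F))⁻¹ ∑_{(i,j)∈E×F} |a(i,j)| μ_i ν_j. Then |||a|||_t ≤ K_t(a) ≤ 2 |||a|||_t. -/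
open Finset

noncomputable def tripleNorm (m n : ℕ) (μ : Fin m → ℝ) (ν : Fin n → ℝ) (t : ℝ)
    (a : Fin m × Fin n → ℝ) : ℝ :=
  sSup {x : ℝ | ∃ (E : Finset (Fin m)) (F : Finset (Fin n)), E.Nonempty ∧ F.Nonempty ∧
    x = (max (∑ i ∈ E, μ i) (t⁻¹ * ∑ j ∈ F, ν j))⁻¹ *
      ∑ i ∈ E, ∑ j ∈ F, |a (i, j)| * μ i * ν j}

noncomputable def Kt (m n : ℕ) (μ : Fin m → ℝ) (ν : Fin n → ℝ) (t : ℝ)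
    (a : Fin m × Fin n → ℝ) : ℝ :=
  sInf {x : ℝ | ∃ b c : Fin m × Fin n → ℝ, a = b + c ∧
    x = (⨆ i : Fin m, ∑ j : Fin n, |b (i, j)| * ν j) +
      t * ⨆ j : Fin n, ∑ i : Fin m, |c (i, j)| * μ i}

section Feasible
set_option linter.unusedSectionVars false
set_option maxHeartbeats 1000000
variable {M N : Type*} [Fintype M] [Fintype N] [DecidableEq M] [DecidableEq N]

lemma rect_uncross (w : M × N → ℝ) (hw : ∀ p, 0 ≤ w p)
    (E E' : Finset M) (F F' : Finset N) (i0 : M) (j0 : N)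
    (hiE : i0 ∈ E) (hiE' : i0 ∉ E') (hjF : j0 ∉ F) (hjF' : j0 ∈ F') :
    (∑ p ∈ E ×ˢ F, w p) + (∑ p ∈ E' ×ˢ F', w p) + w (i0, j0)
      ≤ (∑ p ∈ (E ∪ E') ×ˢ (F ∪ F'), w p) + ∑ p ∈ (E ∩ E') ×ˢ (F ∩ F'), w p := by
  have hinter : (E ×ˢ F) ∩ (E' ×ˢ F') = (E ∩ E') ×ˢ (F ∩ F') := by
    ext p; simp only [Finset.mem_product, Finset.mem_inter]; tauto
  have hnot : (i0, j0) ∉ (E ×ˢ F) ∪ (E' ×ˢ F') := by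
    simp only [Finset.mem_union, Finset.mem_product]; tauto
  have hsub : insert (i0, j0) ((E ×ˢ F) ∪ (E' ×ˢ F')) ⊆ (E ∪ E') ×ˢ (F ∪ F') := by
    intro p hp
    simp only [Finset.mem_insert, Finset.mem_union, Finset.mem_product] at hp ⊢
    rcases hp with rfl | hp | hp
    · exact ⟨Or.inl hiE, Or.inr hjF'⟩
    · exact ⟨Or.inl hp.1, Or.inl hp.2⟩
    · exact ⟨Or.inr hp.1, Or.inr hp.2⟩
  have h1 : (∑ p ∈ E ×ˢ F, w p) + (∑ p ∈ E' ×ˢ F', w p)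
      = (∑ p ∈ (E ×ˢ F) ∪ (E' ×ˢ F'), w p) + ∑ p ∈ (E ∩ E') ×ˢ (F ∩ F'), w p := by
    rw [← hinter, Finset.sum_union_inter]
  have h2 : (∑ p ∈ (E ×ˢ F) ∪ (E' ×ˢ F'), w p) + w (i0, j0)
      = ∑ p ∈ insert (i0, j0) ((E ×ˢ F) ∪ (E' ×ˢ F')), w p := by
    rw [Finset.sum_insert hnot]; ring
  have h3 : ∑ p ∈ insert (i0, j0) ((E ×ˢ F) ∪ (E' ×ˢ F')), w p
      ≤ ∑ p ∈ (E ∪ E') ×ˢ (F ∪ F'), w p :=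
    Finset.sum_le_sum_of_subset_of_nonneg hsub (fun p _ _ => hw p)
  linarith

lemma exists_split :
    ∀ (k : ℕ) (w : M × N → ℝ) (R : M → ℝ) (C : N → ℝ),
      (Finset.univ.filter fun p => w p ≠ 0).card ≤ k →
      (∀ p, 0 ≤ w p) →
      (∀ (E : Finset M) (F : Finset N),
        ∑ p ∈ E ×ˢ F, w p ≤ ∑ i ∈ E, R i + ∑ j ∈ F, C j) →
      ∃ β : M × N → ℝ, (∀ p, 0 ≤ β p) ∧ (∀ p, β p ≤ w p) ∧
        (∀ i, ∑ j, β (i, j) ≤ R i) ∧ (∀ j, ∑ i, (w (i, j) - β (i, j)) ≤ C j) := by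
  intro k
  induction k with
  | zero =>
    intro w R C hcard hw H
    have hw0 : ∀ p, w p = 0 := by
      intro p
      by_contra hp
      have : p ∈ Finset.univ.filter fun p => w p ≠ 0 := by simp [hp]
      have := Finset.card_pos.mpr ⟨p, this⟩
      omega
    refine ⟨0, fun p => le_refl _, fun p => (hw0 p).ge, ?_, ?_⟩
    · intro i
      have := H {i} ∅
      simpa using this
    · intro j
      have := H ∅ {j}
      simp only [Finset.empty_product, Finset.sum_empty, Finset.sum_singleton] at this
      calc ∑ i, (w (i, j) - (0 : M × N → ℝ) (i, j)) = 0 := by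
            simp [hw0]
        _ ≤ C j := by simpa using this
  | succ k ih =>
    intro w R C hcard hw H
    by_cases hsupp : (Finset.univ.filter fun p => w p ≠ 0).Nonempty
    · obtain ⟨p0, hp0⟩ := hsupp
      obtain ⟨i0, j0⟩ := p0
      have hw0ne : w (i0, j0) ≠ 0 := (Finset.mem_filter.mp hp0).2
      have hw0 : 0 < w (i0, j0) := lt_of_le_of_ne (hw _) (Ne.symm hw0ne)
      set s : Finset M → Finset N → ℝ :=
        fun E F => ∑ i ∈ E, R i + ∑ j ∈ F, C j - ∑ p ∈ E ×ˢ F, w p with hs_def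
      have hs : ∀ E F, 0 ≤ s E F := fun E F => by
        have := H E F; simp only [hs_def]; linarith
      have key : ∀ E F E' F', i0 ∈ E → j0 ∉ F → i0 ∉ E' → j0 ∈ F' →
          w (i0, j0) ≤ s E F + s E' F' := by
        intro E F E' F' hiE hjF hiE' hjF'
        have h1 := rect_uncross w hw E E' F F' i0 j0 hiE hiE' hjF hjF'
        have h2 := H (E ∪ E') (F ∪ F')
        have h3 := H (E ∩ E') (F ∩ F')
        have hR : ∑ i ∈ E ∪ E', R i + ∑ i ∈ E ∩ E', R i = ∑ i ∈ E, R i + ∑ i ∈ E', R i :=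
          Finset.sum_union_inter
        have hC : ∑ j ∈ F ∪ F', C j + ∑ j ∈ F ∩ F', C j = ∑ j ∈ F, C j + ∑ j ∈ F', C j :=
          Finset.sum_union_inter
        simp only [hs_def]
        linarith
      -- the two epsilons
      set P1 : Finset (Finset M × Finset N) :=
        Finset.univ.filter (fun p => i0 ∈ p.1 ∧ j0 ∉ p.2) with hP1
      set P2 : Finset (Finset M × Finset N) :=
        Finset.univ.filter (fun p => i0 ∉ p.1 ∧ j0 ∈ p.2) with hP2
      have hP1ne : P1.Nonempty := by
        refine ⟨({i0}, ∅), ?_⟩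
        rw [hP1, Finset.mem_filter]
        exact ⟨Finset.mem_univ _, Finset.mem_singleton_self i0, Finset.notMem_empty j0⟩
      have hP2ne : P2.Nonempty := by
        refine ⟨(∅, {j0}), ?_⟩
        rw [hP2, Finset.mem_filter]
        exact ⟨Finset.mem_univ _, Finset.notMem_empty i0, Finset.mem_singleton_self j0⟩
      set ε1 : ℝ := P1.inf' hP1ne (fun p => s p.1 p.2) with hε1def
      set ε2 : ℝ := P2.inf' hP2ne (fun p => s p.1 p.2) with hε2def
      have hε1le : ∀ E F, i0 ∈ E → j0 ∉ F → ε1 ≤ s E F := by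
        intro E F h1 h2
        have hmem : (E, F) ∈ P1 := by
          rw [hP1, Finset.mem_filter]
          exact ⟨Finset.mem_univ _, h1, h2⟩
        exact Finset.inf'_le (fun p => s p.1 p.2) hmem
      have hε2le : ∀ E F, i0 ∉ E → j0 ∈ F → ε2 ≤ s E F := by
        intro E F h1 h2
        have hmem : (E, F) ∈ P2 := by
          rw [hP2, Finset.mem_filter]
          exact ⟨Finset.mem_univ _, h1, h2⟩
        exact Finset.inf'_le (fun p => s p.1 p.2) hmem
      have hε1nn : 0 ≤ ε1 := Finset.le_inf' _ _ (fun p _ => hs p.1 p.2)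
      have hε2nn : 0 ≤ ε2 := Finset.le_inf' _ _ (fun p _ => hs p.1 p.2)
      have hkey : w (i0, j0) ≤ ε1 + ε2 := by
        obtain ⟨p1, hp1mem, hp1⟩ := Finset.exists_mem_eq_inf' hP1ne (fun p => s p.1 p.2)
        obtain ⟨p2, hp2mem, hp2⟩ := Finset.exists_mem_eq_inf' hP2ne (fun p => s p.1 p.2)
        simp only [hP1, Finset.mem_filter] at hp1mem
        simp only [hP2, Finset.mem_filter] at hp2mem
        rw [hε1def, hε2def, hp1, hp2]
        exact key p1.1 p1.2 p2.1 p2.2 hp1mem.2.1 hp1mem.2.2 hp2mem.2.1 hp2mem.2.2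
      set δ1 : ℝ := min ε1 (w (i0, j0)) with hδ1def
      set δ2 : ℝ := w (i0, j0) - δ1 with hδ2def
      have hδ1nn : 0 ≤ δ1 := le_min hε1nn hw0.le
      have hδ1w : δ1 ≤ w (i0, j0) := min_le_right _ _
      have hδ1ε : δ1 ≤ ε1 := min_le_left _ _
      have hδ2nn : 0 ≤ δ2 := by simp only [hδ2def]; linarith
      have hδ2ε : δ2 ≤ ε2 := by
        rcases min_cases ε1 (w (i0, j0)) with ⟨h1, h2⟩ | ⟨h1, h2⟩ <;>
          simp only [hδ2def, hδ1def, h1] <;> linarith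
      set w' : M × N → ℝ := Function.update w (i0, j0) 0 with hw'def
      set R' : M → ℝ := Function.update R i0 (R i0 - δ1) with hR'def
      set C' : N → ℝ := Function.update C j0 (C j0 - δ2) with hC'def
      have hw'eq : ∀ p, w' p = w p - (if p = (i0, j0) then w (i0, j0) else 0) := by
        intro p
        by_cases hp : p = (i0, j0)
        · subst hp; simp [hw'def]
        · simp [hw'def, Function.update_of_ne hp, hp]
      have hR'eq : ∀ i, R' i = R i - (if i = i0 then δ1 else 0) := by
        intro i
        by_cases hi : i = i0
        · subst hi; simp [hR'def]
        · simp [hR'def, Function.update_of_ne hi, hi]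
      have hC'eq : ∀ j, C' j = C j - (if j = j0 then δ2 else 0) := by
        intro j
        by_cases hj : j = j0
        · subst hj; simp [hC'def]
        · simp [hC'def, Function.update_of_ne hj, hj]
      have hw'nn : ∀ p, 0 ≤ w' p := by
        intro p
        by_cases hp : p = (i0, j0)
        · subst hp; simp [hw'def]
        · rw [hw'eq p, if_neg hp]; simpa using hw p
      -- card bound
      have hcard' : (Finset.univ.filter fun p => w' p ≠ 0).card ≤ k := by
        have hsub : (Finset.univ.filter fun p => w' p ≠ 0) ⊆
            (Finset.univ.filter fun p => w p ≠ 0).erase (i0, j0) := by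
          intro p hp
          simp only [Finset.mem_filter, Finset.mem_univ, true_and] at hp
          by_cases hpe : p = (i0, j0)
          · exfalso; apply hp; rw [hw'eq, if_pos hpe]
            subst hpe; ring
          · rw [Finset.mem_erase]
            refine ⟨hpe, ?_⟩
            simp only [Finset.mem_filter, Finset.mem_univ, true_and]
            rw [hw'eq, if_neg hpe] at hp
            intro h; apply hp; rw [h]; ring
        have h1 := Finset.card_le_card hsub
        have h2 := Finset.card_erase_of_mem hp0
        omega
      -- sums of updated functions
      have hsumR' : ∀ E : Finset M, ∑ i ∈ E, R' i
          = ∑ i ∈ E, R i - (if i0 ∈ E then δ1 else 0) := by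
        intro E
        rw [Finset.sum_congr rfl (fun i _ => hR'eq i), Finset.sum_sub_distrib,
          Finset.sum_ite_eq' E i0 (fun _ => δ1)]
      have hsumC' : ∀ F : Finset N, ∑ j ∈ F, C' j
          = ∑ j ∈ F, C j - (if j0 ∈ F then δ2 else 0) := by
        intro F
        rw [Finset.sum_congr rfl (fun j _ => hC'eq j), Finset.sum_sub_distrib,
          Finset.sum_ite_eq' F j0 (fun _ => δ2)]
      have hsumw' : ∀ (E : Finset M) (F : Finset N), ∑ p ∈ E ×ˢ F, w' p
          = ∑ p ∈ E ×ˢ F, w p - (if i0 ∈ E ∧ j0 ∈ F then w (i0, j0) else 0) := by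
        intro E F
        rw [Finset.sum_congr rfl (fun p _ => hw'eq p), Finset.sum_sub_distrib,
          Finset.sum_ite_eq' (E ×ˢ F) (i0, j0) (fun _ => w (i0, j0))]
        congr 1
        simp [Finset.mem_product]
      have H' : ∀ (E : Finset M) (F : Finset N),
          ∑ p ∈ E ×ˢ F, w' p ≤ ∑ i ∈ E, R' i + ∑ j ∈ F, C' j := by
        intro E F
        rw [hsumw', hsumR', hsumC']
        by_cases hE : i0 ∈ E <;> by_cases hF : j0 ∈ F <;>
          simp only [hE, hF, if_pos, if_neg, true_and, and_true, if_true, and_false,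
            false_and, if_false, not_false_iff]
        · have := H E F; simp only [hδ2def]; linarith
        · have := hε1le E F hE hF
          simp only [hs_def] at this; linarith
        · have := hε2le E F hE hF
          simp only [hs_def] at this; linarith
        · have := H E F; linarith
      obtain ⟨β', hβ'nn, hβ'w, hβ'row, hβ'col⟩ := ih w' R' C' hcard' hw'nn H'
      have hβ'00 : β' (i0, j0) = 0 := by
        have h1 := hβ'w (i0, j0)
        have h2 := hβ'nn (i0, j0)
        have : w' (i0, j0) = 0 := by simp [hw'def]
        linarith [this ▸ h1]
      set β : M × N → ℝ := Function.update β' (i0, j0) δ1 with hβdef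
      have hβeq : ∀ p, β p = β' p + (if p = (i0, j0) then δ1 else 0) := by
        intro p
        by_cases hp : p = (i0, j0)
        · subst hp; simp [hβdef, hβ'00]
        · simp [hβdef, Function.update_of_ne hp, hp]
      refine ⟨β, ?_, ?_, ?_, ?_⟩
      · intro p
        rw [hβeq]
        split_ifs <;> linarith [hβ'nn p]
      · intro p
        rw [hβeq]
        by_cases hp : p = (i0, j0)
        · subst hp; rw [hβ'00, if_pos rfl]; linarith
        · rw [if_neg hp]
          have := hβ'w p
          rw [hw'eq, if_neg hp] at this; linarith
      · intro i
        have hite : ∀ p : M × N, (if p = (i0, j0) then δ1 else 0)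
            = if p.2 = j0 then (if p.1 = i0 then δ1 else 0) else 0 := by
          intro p
          by_cases h1 : p.1 = i0 <;> by_cases h2 : p.2 = j0 <;>
            simp [Prod.ext_iff, h1, h2]
        rw [Finset.sum_congr rfl (fun j _ => hβeq (i, j)), Finset.sum_add_distrib]
        have hsum : ∑ j : N, (if ((i : M), j) = (i0, j0) then δ1 else 0)
            = if i = i0 then δ1 else 0 := by
          rw [Finset.sum_congr rfl (fun j _ => hite ((i : M), j))]
          simp [Finset.sum_ite_eq']
        rw [hsum]
        have h2 := hβ'row i
        rw [hR'eq i] at h2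
        by_cases hi : i = i0
        · rw [if_pos hi]
          rw [if_pos hi] at h2
          linarith
        · rw [if_neg hi]
          rw [if_neg hi] at h2
          linarith
      · intro j
        have hrw : ∀ i, w (i, j) - β (i, j)
            = (w' (i, j) - β' (i, j)) + (if (i, j) = ((i0 : M), (j0 : N)) then δ2 else 0) := by
          intro i
          rw [hβeq, hw'eq]
          by_cases hp : ((i : M), j) = ((i0 : M), (j0 : N))
          · rw [if_pos hp, if_pos hp, if_pos hp]
            have : w ((i : M), j) = w (i0, j0) := by rw [hp]
            simp only [hδ2def]; linarith
          · rw [if_neg hp, if_neg hp, if_neg hp]; ring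
        rw [Finset.sum_congr rfl (fun i _ => hrw i), Finset.sum_add_distrib]
        have hite : ∀ p : M × N, (if p = (i0, j0) then δ2 else 0)
            = if p.1 = i0 then (if p.2 = j0 then δ2 else 0) else 0 := by
          intro p
          by_cases h1 : p.1 = i0 <;> by_cases h2 : p.2 = j0 <;>
            simp [Prod.ext_iff, h1, h2]
        have hsum : ∑ i : M, (if ((i : M), j) = (i0, j0) then δ2 else 0)
            = if j = j0 then δ2 else 0 := by
          rw [Finset.sum_congr rfl (fun i _ => hite ((i : M), j))]
          simp [Finset.sum_ite_eq']
        rw [hsum]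
        have h2 := hβ'col j
        rw [hC'eq j] at h2
        by_cases hj : j = j0
        · rw [if_pos hj]
          rw [if_pos hj] at h2
          linarith
        · rw [if_neg hj]
          rw [if_neg hj] at h2
          linarith
    · -- no support: w = 0
      have hw0 : ∀ p, w p = 0 := by
        intro p
        by_contra hp
        exact hsupp ⟨p, by simp [hp]⟩
      refine ⟨0, fun p => le_refl _, fun p => (hw0 p).ge, ?_, ?_⟩
      · intro i
        have := H {i} ∅
        simpa using this
      · intro j
        have := H ∅ {j}
        simp only [Finset.empty_product, Finset.sum_empty, Finset.sum_singleton] at this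
        calc ∑ i, (w (i, j) - (0 : M × N → ℝ) (i, j)) = 0 := by simp [hw0]
          _ ≤ C j := by simpa using this

end Feasible

lemma exists_split' {M N : Type*} [Fintype M] [Fintype N] [DecidableEq M] [DecidableEq N]
    (w : M × N → ℝ) (R : M → ℝ) (C : N → ℝ)
    (hw : ∀ p, 0 ≤ w p)
    (H : ∀ (E : Finset M) (F : Finset N),
        ∑ p ∈ E ×ˢ F, w p ≤ ∑ i ∈ E, R i + ∑ j ∈ F, C j) :
    ∃ β : M × N → ℝ, (∀ p, 0 ≤ β p) ∧ (∀ p, β p ≤ w p) ∧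
      (∀ i, ∑ j, β (i, j) ≤ R i) ∧ (∀ j, ∑ i, (w (i, j) - β (i, j)) ≤ C j) :=
  exists_split (Finset.univ.filter fun p => w p ≠ 0).card w R C le_rfl hw H

set_option maxHeartbeats 1000000 in
/-- `|||a|||_t ≤ K_t(a) ≤ 2 |||a|||_t`. -/
theorem Kt_equiv_tripleNorm (m n : ℕ) (μ : Fin m → ℝ) (ν : Fin n → ℝ)
    (hμ : ∀ i, 0 < μ i) (hν : ∀ j, 0 < ν j) (t : ℝ) (ht : 0 < t)
    (a : Fin m × Fin n → ℝ) :
    tripleNorm m n μ ν t a ≤ Kt m n μ ν t a ∧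
      Kt m n μ ν t a ≤ 2 * tripleNorm m n μ ν t a := by
  have hsup0 : ∀ (k : ℕ) (f : Fin k → ℝ), (∀ i, f i = 0) → (⨆ i, f i) = 0 := by
    intro k f hf
    rcases Nat.eq_zero_or_pos k with rfl | hk
    · exact Real.iSup_of_isEmpty _
    · haveI : Nonempty (Fin k) := ⟨⟨0, hk⟩⟩
      simp only [hf]
      exact ciSup_const
  by_cases hmn : m = 0 ∨ n = 0
  · -- degenerate case
    have hall : ∀ x ∈ {x : ℝ | ∃ b c : Fin m × Fin n → ℝ, a = b + c ∧
        x = (⨆ i : Fin m, ∑ j : Fin n, |b (i, j)| * ν j) +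
          t * ⨆ j : Fin n, ∑ i : Fin m, |c (i, j)| * μ i}, x = 0 := by
      rintro x ⟨b, c, hbc, rfl⟩
      rcases hmn with rfl | rfl
      · rw [hsup0 0 _ (fun i => i.elim0), hsup0 n _ (fun j => by
          simp), mul_zero, add_zero]
      · rw [hsup0 m _ (fun i => by simp), hsup0 0 _ (fun j => j.elim0), mul_zero, add_zero]
    have hmem0 : (0 : ℝ) ∈ {x : ℝ | ∃ b c : Fin m × Fin n → ℝ, a = b + c ∧
        x = (⨆ i : Fin m, ∑ j : Fin n, |b (i, j)| * ν j) +
          t * ⨆ j : Fin n, ∑ i : Fin m, |c (i, j)| * μ i} := by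
      have hx : ∃ b c : Fin m × Fin n → ℝ, a = b + c ∧
          ((⨆ i : Fin m, ∑ j : Fin n, |a (i, j)| * ν j) +
            t * ⨆ j : Fin n, ∑ i : Fin m, |(0 : Fin m × Fin n → ℝ) (i, j)| * μ i)
          = (⨆ i : Fin m, ∑ j : Fin n, |b (i, j)| * ν j) +
            t * ⨆ j : Fin n, ∑ i : Fin m, |c (i, j)| * μ i :=
        ⟨a, 0, (add_zero a).symm, rfl⟩
      obtain ⟨b, c, hbc, hval⟩ := hx
      have := hall _ ⟨b, c, hbc, rfl⟩
      exact ⟨b, c, hbc, this.symm⟩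
    have hKt0 : Kt m n μ ν t a = 0 := by
      unfold Kt
      refine le_antisymm (csInf_le ⟨0, fun x hx => (hall x hx).ge⟩ hmem0)
        (le_csInf ⟨0, hmem0⟩ (fun x hx => (hall x hx).ge))
    have hT0 : tripleNorm m n μ ν t a = 0 := by
      unfold tripleNorm
      have hempty : {x : ℝ | ∃ (E : Finset (Fin m)) (F : Finset (Fin n)),
          E.Nonempty ∧ F.Nonempty ∧
          x = (max (∑ i ∈ E, μ i) (t⁻¹ * ∑ j ∈ F, ν j))⁻¹ *
            ∑ i ∈ E, ∑ j ∈ F, |a (i, j)| * μ i * ν j} = ∅ := by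
        ext x
        simp only [Set.mem_setOf_eq, Set.mem_empty_iff_false, iff_false, not_exists]
        rintro E F ⟨hE, hF, -⟩
        rcases hmn with rfl | rfl
        · obtain ⟨i, -⟩ := hE; exact i.elim0
        · obtain ⟨j, -⟩ := hF; exact j.elim0
      rw [hempty, Real.sSup_empty]
    rw [hKt0, hT0]
    norm_num
  · push_neg at hmn
    obtain ⟨hm, hn⟩ := hmn
    haveI : Nonempty (Fin m) := ⟨⟨0, Nat.pos_of_ne_zero hm⟩⟩
    haveI : Nonempty (Fin n) := ⟨⟨0, Nat.pos_of_ne_zero hn⟩⟩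
    set T : Set ℝ := {x : ℝ | ∃ (E : Finset (Fin m)) (F : Finset (Fin n)),
        E.Nonempty ∧ F.Nonempty ∧
        x = (max (∑ i ∈ E, μ i) (t⁻¹ * ∑ j ∈ F, ν j))⁻¹ *
          ∑ i ∈ E, ∑ j ∈ F, |a (i, j)| * μ i * ν j} with hT_def
    set K : Set ℝ := {x : ℝ | ∃ b c : Fin m × Fin n → ℝ, a = b + c ∧
        x = (⨆ i : Fin m, ∑ j : Fin n, |b (i, j)| * ν j) +
          t * ⨆ j : Fin n, ∑ i : Fin m, |c (i, j)| * μ i} with hK_def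
    have hTt : tripleNorm m n μ ν t a = sSup T := by rw [hT_def]; rfl
    have hKt : Kt m n μ ν t a = sInf K := by rw [hK_def]; rfl
    -- boundedness of T
    have hTbdd : BddAbove T := by
      have hsub : T ⊆ Set.range (fun p : Finset (Fin m) × Finset (Fin n) =>
          (max (∑ i ∈ p.1, μ i) (t⁻¹ * ∑ j ∈ p.2, ν j))⁻¹ *
            ∑ i ∈ p.1, ∑ j ∈ p.2, |a (i, j)| * μ i * ν j) := by
        rintro x ⟨E, F, -, -, rfl⟩
        exact ⟨(E, F), rfl⟩
      exact (Set.Finite.bddAbove (Set.finite_range _)).mono hsub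
    have hmx_pos : ∀ (E : Finset (Fin m)) (F : Finset (Fin n)), E.Nonempty →
        0 < max (∑ i ∈ E, μ i) (t⁻¹ * ∑ j ∈ F, ν j) := by
      intro E F hE
      exact lt_of_lt_of_le (Finset.sum_pos (fun i _ => hμ i) hE) (le_max_left _ _)
    have hmemT : ∀ (E : Finset (Fin m)) (F : Finset (Fin n)), E.Nonempty → F.Nonempty →
        (max (∑ i ∈ E, μ i) (t⁻¹ * ∑ j ∈ F, ν j))⁻¹ *
          ∑ i ∈ E, ∑ j ∈ F, |a (i, j)| * μ i * ν j ≤ sSup T := by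
      intro E F hE hF
      exact le_csSup hTbdd ⟨E, F, hE, hF, rfl⟩
    have hlamnn : 0 ≤ sSup T := by
      refine le_trans ?_ (hmemT Finset.univ Finset.univ Finset.univ_nonempty
        Finset.univ_nonempty)
      have h1 : (0:ℝ) ≤ (max (∑ i : Fin m, μ i) (t⁻¹ * ∑ j : Fin n, ν j))⁻¹ :=
        inv_nonneg.mpr (hmx_pos _ _ Finset.univ_nonempty).le
      have h2 : (0:ℝ) ≤ ∑ i : Fin m, ∑ j : Fin n, |a (i, j)| * μ i * ν j :=
        Finset.sum_nonneg fun i _ => Finset.sum_nonneg fun j _ =>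
          mul_nonneg (mul_nonneg (abs_nonneg _) (hμ i).le) (hν j).le
      exact mul_nonneg h1 h2
    -- K nonempty and nonneg
    have hKne : K.Nonempty := ⟨_, a, 0, (add_zero a).symm, rfl⟩
    have hKlb : ∀ x ∈ K, (0:ℝ) ≤ x := by
      rintro x ⟨b, c, -, rfl⟩
      have h1 : (0:ℝ) ≤ ⨆ i : Fin m, ∑ j : Fin n, |b (i, j)| * ν j :=
        Real.iSup_nonneg fun i => Finset.sum_nonneg fun j _ =>
          mul_nonneg (abs_nonneg _) (hν j).le
      have h2 : (0:ℝ) ≤ ⨆ j : Fin n, ∑ i : Fin m, |c (i, j)| * μ i :=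
        Real.iSup_nonneg fun j => Finset.sum_nonneg fun i _ =>
          mul_nonneg (abs_nonneg _) (hμ i).le
      nlinarith
    constructor
    · -- Part 1 : tripleNorm ≤ Kt
      rw [hTt, hKt]
      apply Real.sSup_le
      · rintro x ⟨E, F, hE, hF, rfl⟩
        apply le_csInf hKne
        rintro y ⟨b, c, hbc, rfl⟩
        set S0 : ℝ := ⨆ i : Fin m, ∑ j : Fin n, |b (i, j)| * ν j with hS0def
        set S1 : ℝ := ⨆ j : Fin n, ∑ i : Fin m, |c (i, j)| * μ i with hS1def
        set mx : ℝ := max (∑ i ∈ E, μ i) (t⁻¹ * ∑ j ∈ F, ν j) with hmxdef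
        have hmx : 0 < mx := hmx_pos E F hE
        have hS0nn : 0 ≤ S0 :=
          Real.iSup_nonneg fun i => Finset.sum_nonneg fun j _ =>
          mul_nonneg (abs_nonneg _) (hν j).le
        have hS1nn : 0 ≤ S1 :=
          Real.iSup_nonneg fun j => Finset.sum_nonneg fun i _ =>
          mul_nonneg (abs_nonneg _) (hμ i).le
        have hrowb : ∀ i, ∑ j ∈ F, |b (i, j)| * ν j ≤ S0 := by
          intro i
          calc ∑ j ∈ F, |b (i, j)| * ν j ≤ ∑ j : Fin n, |b (i, j)| * ν j :=
                Finset.sum_le_sum_of_subset_of_nonneg (Finset.subset_univ F)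
                  (fun j _ _ => mul_nonneg (abs_nonneg _) (hν j).le)
            _ ≤ S0 := le_ciSup (f := fun i => ∑ j : Fin n, |b (i, j)| * ν j)
                (Set.Finite.bddAbove (Set.finite_range _)) i
        have hcolc : ∀ j, ∑ i ∈ E, |c (i, j)| * μ i ≤ S1 := by
          intro j
          calc ∑ i ∈ E, |c (i, j)| * μ i ≤ ∑ i : Fin m, |c (i, j)| * μ i :=
                Finset.sum_le_sum_of_subset_of_nonneg (Finset.subset_univ E)
                  (fun i _ _ => mul_nonneg (abs_nonneg _) (hμ i).le)
            _ ≤ S1 := le_ciSup (f := fun j => ∑ i : Fin m, |c (i, j)| * μ i)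
                (Set.Finite.bddAbove (Set.finite_range _)) j
        have habs : ∀ i j, |a (i, j)| ≤ |b (i, j)| + |c (i, j)| := by
          intro i j
          rw [hbc]
          exact abs_add_le _ _
        have h1 : ∑ i ∈ E, ∑ j ∈ F, |a (i, j)| * μ i * ν j
            ≤ ∑ i ∈ E, ∑ j ∈ F, |b (i, j)| * μ i * ν j
              + ∑ i ∈ E, ∑ j ∈ F, |c (i, j)| * μ i * ν j := by
          rw [← Finset.sum_add_distrib]
          apply Finset.sum_le_sum
          intro i _
          rw [← Finset.sum_add_distrib]
          apply Finset.sum_le_sum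
          intro j _
          have h := habs i j
          have hμi := (hμ i).le
          have hνj := (hν j).le
          have hmono : |a (i, j)| * μ i * ν j ≤ (|b (i, j)| + |c (i, j)|) * μ i * ν j :=
            mul_le_mul_of_nonneg_right (mul_le_mul_of_nonneg_right h hμi) hνj
          have hexp : (|b (i, j)| + |c (i, j)|) * μ i * ν j
              = |b (i, j)| * μ i * ν j + |c (i, j)| * μ i * ν j := by ring
          linarith
        have h3 : ∑ i ∈ E, ∑ j ∈ F, |b (i, j)| * μ i * ν j ≤ mx * S0 := by
          calc ∑ i ∈ E, ∑ j ∈ F, |b (i, j)| * μ i * ν j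
              = ∑ i ∈ E, μ i * ∑ j ∈ F, |b (i, j)| * ν j := by
                refine Finset.sum_congr rfl fun i _ => ?_
                rw [Finset.mul_sum]
                exact Finset.sum_congr rfl fun j _ => by ring
            _ ≤ ∑ i ∈ E, μ i * S0 :=
                Finset.sum_le_sum fun i _ => mul_le_mul_of_nonneg_left (hrowb i) (hμ i).le
            _ = (∑ i ∈ E, μ i) * S0 := by rw [Finset.sum_mul]
            _ ≤ mx * S0 := mul_le_mul_of_nonneg_right (le_max_left _ _) hS0nn
        have hνF : ∑ j ∈ F, ν j ≤ t * mx := by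
          have h0 : t⁻¹ * ∑ j ∈ F, ν j ≤ mx := le_max_right _ _
          have := mul_le_mul_of_nonneg_left h0 ht.le
          calc ∑ j ∈ F, ν j = t * (t⁻¹ * ∑ j ∈ F, ν j) := by
                field_simp
            _ ≤ t * mx := this
        have h4 : ∑ i ∈ E, ∑ j ∈ F, |c (i, j)| * μ i * ν j ≤ mx * (t * S1) := by
          calc ∑ i ∈ E, ∑ j ∈ F, |c (i, j)| * μ i * ν j
              = ∑ j ∈ F, ν j * ∑ i ∈ E, |c (i, j)| * μ i := by
                rw [Finset.sum_comm]
                refine Finset.sum_congr rfl fun j _ => ?_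
                rw [Finset.mul_sum]
                exact Finset.sum_congr rfl fun i _ => by ring
            _ ≤ ∑ j ∈ F, ν j * S1 :=
                Finset.sum_le_sum fun j _ => mul_le_mul_of_nonneg_left (hcolc j) (hν j).le
            _ = (∑ j ∈ F, ν j) * S1 := by rw [Finset.sum_mul]
            _ ≤ (t * mx) * S1 := mul_le_mul_of_nonneg_right hνF hS1nn
            _ = mx * (t * S1) := by ring
        calc mx⁻¹ * ∑ i ∈ E, ∑ j ∈ F, |a (i, j)| * μ i * ν j
            ≤ mx⁻¹ * (mx * (S0 + t * S1)) := by
              apply mul_le_mul_of_nonneg_left _ (inv_nonneg.mpr hmx.le)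
              nlinarith
          _ = S0 + t * S1 := by
              field_simp
      · exact le_csInf hKne hKlb
    · -- Part 2 : Kt ≤ 2 * tripleNorm
      rw [hTt, hKt]
      set lam : ℝ := sSup T with hlamdef
      set w : Fin m × Fin n → ℝ := fun p => |a p| * μ p.1 * ν p.2 with hw_def
      have hw : ∀ p, 0 ≤ w p := by
        intro p
        rw [hw_def]
        exact mul_nonneg (mul_nonneg (abs_nonneg _) (hμ p.1).le) (hν p.2).le
      have H : ∀ (E : Finset (Fin m)) (F : Finset (Fin n)),
          ∑ p ∈ E ×ˢ F, w p ≤ ∑ i ∈ E, lam * μ i + ∑ j ∈ F, (lam / t) * ν j := by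
        intro E F
        have hRnn : (0:ℝ) ≤ ∑ i ∈ E, lam * μ i :=
          Finset.sum_nonneg fun i _ => mul_nonneg hlamnn (hμ i).le
        have hCnn : (0:ℝ) ≤ ∑ j ∈ F, (lam / t) * ν j :=
          Finset.sum_nonneg fun j _ => mul_nonneg (div_nonneg hlamnn ht.le) (hν j).le
        rw [Finset.sum_product]
        rcases Finset.eq_empty_or_nonempty E with rfl | hE
        · simp only [Finset.sum_empty]
          linarith
        rcases Finset.eq_empty_or_nonempty F with rfl | hF
        · simp only [Finset.sum_empty, Finset.sum_const_zero]
          linarith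
        have h0 := hmemT E F hE hF
        set mx : ℝ := max (∑ i ∈ E, μ i) (t⁻¹ * ∑ j ∈ F, ν j) with hmxdef
        have hmx : 0 < mx := hmx_pos E F hE
        have hsum_eq : ∑ i ∈ E, ∑ j ∈ F, w (i, j)
            = ∑ i ∈ E, ∑ j ∈ F, |a (i, j)| * μ i * ν j := by
          refine Finset.sum_congr rfl fun i _ => Finset.sum_congr rfl fun j _ => ?_
          rw [hw_def]
        have h1 : ∑ i ∈ E, ∑ j ∈ F, |a (i, j)| * μ i * ν j ≤ mx * lam := by
          have h2 := mul_le_mul_of_nonneg_left h0 hmx.le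
          rw [← mul_assoc, mul_inv_cancel₀ hmx.ne', one_mul] at h2
          exact h2
        have hmxle : mx ≤ (∑ i ∈ E, μ i) + t⁻¹ * ∑ j ∈ F, ν j := by
          apply max_le
          · have : (0:ℝ) ≤ t⁻¹ * ∑ j ∈ F, ν j :=
              mul_nonneg (inv_nonneg.mpr ht.le) (Finset.sum_nonneg fun j _ => (hν j).le)
            linarith
          · have : (0:ℝ) ≤ ∑ i ∈ E, μ i := Finset.sum_nonneg fun i _ => (hμ i).le
            linarith
        have h3 : mx * lam ≤ ((∑ i ∈ E, μ i) + t⁻¹ * ∑ j ∈ F, ν j) * lam :=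
          mul_le_mul_of_nonneg_right hmxle hlamnn
        have h4 : ((∑ i ∈ E, μ i) + t⁻¹ * ∑ j ∈ F, ν j) * lam
            = ∑ i ∈ E, lam * μ i + ∑ j ∈ F, (lam / t) * ν j := by
          have e1 : ((∑ i ∈ E, μ i) + t⁻¹ * ∑ j ∈ F, ν j) * lam
              = (∑ i ∈ E, μ i) * lam + (∑ j ∈ F, ν j) * (lam * t⁻¹) := by ring
          rw [e1, Finset.sum_mul, Finset.sum_mul]
          congr 1
          · exact Finset.sum_congr rfl fun i _ => by ring
          · exact Finset.sum_congr rfl fun j _ => by rw [div_eq_mul_inv]; ring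
        rw [hsum_eq]
        linarith
      obtain ⟨β, hβnn, hβw, hβrow, hβcol⟩ :=
        exists_split' w (fun i => lam * μ i) (fun j => (lam / t) * ν j) hw H
      set bf : Fin m × Fin n → ℝ :=
        fun p => if w p = 0 then 0 else (β p / w p) * a p with hbf_def
      set cf : Fin m × Fin n → ℝ := fun p => a p - bf p with hcf_def
      have hdecomp : a = bf + cf := by
        funext p
        rw [hcf_def]
        simp only [Pi.add_apply]
        ring
      have hμν : ∀ p : Fin m × Fin n, 0 < μ p.1 * ν p.2 :=
        fun p => mul_pos (hμ p.1) (hν p.2)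
      have ha0 : ∀ p : Fin m × Fin n, w p = 0 → a p = 0 := by
        intro p hp
        rw [hw_def] at hp
        simp only at hp
        have := hμν p
        by_contra hap
        have habsp : 0 < |a p| := abs_pos.mpr hap
        have : |a p| * μ p.1 * ν p.2 > 0 :=
          mul_pos (mul_pos habsp (hμ p.1)) (hν p.2)
        linarith
      have hβ0 : ∀ p : Fin m × Fin n, w p = 0 → β p = 0 :=
        fun p hp => le_antisymm (hp ▸ hβw p) (hβnn p)
      have habs_b : ∀ p : Fin m × Fin n, |bf p| * (μ p.1 * ν p.2) = β p := by
        intro p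
        by_cases hp : w p = 0
        · rw [hbf_def]
          simp only [hp, if_true, if_pos]
          rw [hβ0 p hp]
          simp
        · have hwpos : 0 < w p := lt_of_le_of_ne (hw p) (Ne.symm hp)
          rw [hbf_def]
          simp only [if_neg hp]
          rw [abs_mul, abs_of_nonneg (div_nonneg (hβnn p) hwpos.le)]
          have hwp : w p = |a p| * μ p.1 * ν p.2 := by rw [hw_def]
          field_simp [hp]
          rw [hwp]
          ring
      have habs_c : ∀ p : Fin m × Fin n, |cf p| * (μ p.1 * ν p.2) = w p - β p := by
        intro p
        by_cases hp : w p = 0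
        · simp only [hcf_def, hbf_def, if_pos hp, ha0 p hp, hβ0 p hp, hp]
          simp
        · have hwpos : 0 < w p := lt_of_le_of_ne (hw p) (Ne.symm hp)
          have hr1 : β p / w p ≤ 1 := (div_le_one hwpos).mpr (hβw p)
          rw [hcf_def, hbf_def]
          simp only [if_neg hp]
          have : a p - β p / w p * a p = (1 - β p / w p) * a p := by ring
          rw [this, abs_mul, abs_of_nonneg (by linarith : (0:ℝ) ≤ 1 - β p / w p)]
          have hwp : w p = |a p| * μ p.1 * ν p.2 := by rw [hw_def]
          field_simp
          rw [hwp]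
          ring
      have hrow : ∀ i, ∑ j : Fin n, |bf (i, j)| * ν j ≤ lam := by
        intro i
        have h1 : μ i * ∑ j : Fin n, |bf (i, j)| * ν j = ∑ j : Fin n, β (i, j) := by
          rw [Finset.mul_sum]
          refine Finset.sum_congr rfl fun j _ => ?_
          have := habs_b (i, j)
          simp only at this
          nlinarith [this]
        have h2 := hβrow i
        have h3 : μ i * ∑ j : Fin n, |bf (i, j)| * ν j ≤ μ i * lam := by
          rw [h1]; linarith [h2]
        exact (mul_le_mul_iff_right₀ (hμ i)).mp h3
      have hcol : ∀ j, ∑ i : Fin m, |cf (i, j)| * μ i ≤ lam / t := by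
        intro j
        have h1 : ν j * ∑ i : Fin m, |cf (i, j)| * μ i
            = ∑ i : Fin m, (w (i, j) - β (i, j)) := by
          rw [Finset.mul_sum]
          refine Finset.sum_congr rfl fun i _ => ?_
          have := habs_c (i, j)
          simp only at this
          nlinarith [this]
        have h2 := hβcol j
        have h3 : ν j * ∑ i : Fin m, |cf (i, j)| * μ i ≤ ν j * (lam / t) := by
          rw [h1]; linarith [h2]
        exact (mul_le_mul_iff_right₀ (hν j)).mp h3
      have hS0 : (⨆ i : Fin m, ∑ j : Fin n, |bf (i, j)| * ν j) ≤ lam := ciSup_le hrow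
      have hS1 : (⨆ j : Fin n, ∑ i : Fin m, |cf (i, j)| * μ i) ≤ lam / t := ciSup_le hcol
      calc sInf K ≤ (⨆ i : Fin m, ∑ j : Fin n, |bf (i, j)| * ν j)
            + t * ⨆ j : Fin n, ∑ i : Fin m, |cf (i, j)| * μ i :=
            csInf_le ⟨0, hKlb⟩ ⟨bf, cf, hdecomp, rfl⟩
        _ ≤ lam + t * (lam / t) := by
            have := mul_le_mul_of_nonneg_left hS1 ht.le
            linarith
        _ = 2 * lam := by
            field_simp
            ring
end

section
/- Let M = Fin m, N = Fin n with positive weights μ, ν, t > 0, and p > 1. Define |||a|||_{p,t} = sup over nonempty E ⊆ M, F ⊆ N of (μ(E)^{1/p*} ∨ t⁻¹ν(F)^{1/p*})⁻¹ ∑_{(i,j)∈E×F} |a(i,j)| μ_i ν_j, where 1/p + 1/p* = 1. If |||a|||_{p,t} ≤ 1, then M × N can be partitioned into disjoint sets A, B such that the ℓ^{p,∞}_m(ℓ^1_n)-quasinorm of 1_A · a is at most 1 and the ℓ^{p,∞}_n(ℓ^1_m)-quasinorm of the transpose of 1_B · a is at most 1/t. -/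
open Finset

lemma concave_four {θ : ℝ} (h0 : 0 < θ) (h1 : θ < 1) {a b δ : ℝ}
    (ha : 0 ≤ a) (hab : a ≤ b) (hδ : 0 ≤ δ) :
    (b + δ) ^ θ + a ^ θ ≤ (a + δ) ^ θ + b ^ θ := by
  rcases eq_or_lt_of_le (show a ≤ b + δ by linarith) with heq | hlt
  · have hδ0 : δ = 0 := by nlinarith
    have hba : b = a := by linarith
    subst hba; rw [hδ0]
  · set T : ℝ := b + δ - a with hT
    have hTpos : 0 < T := by dsimp [T]; linarith
    have conc := (Real.strictConcaveOn_rpow h0 h1).concaveOn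
    set lam : ℝ := δ / T with hlam
    have hlam0 : 0 ≤ lam := div_nonneg hδ hTpos.le
    have hlam1 : lam ≤ 1 := by
      rw [hlam, div_le_one hTpos]; linarith
    have hmema : a ∈ Set.Ici (0:ℝ) := ha
    have hmemb : b + δ ∈ Set.Ici (0:ℝ) := by simp only [Set.mem_Ici]; linarith
    have e1 : (1 - lam) * a + lam * (b + δ) = a + δ := by
      rw [hlam]; field_simp; ring
    have e2 : lam * a + (1 - lam) * (b + δ) = b := by
      rw [hlam]; field_simp; ring
    have i1 := conc.2 hmema hmemb (by linarith : (0:ℝ) ≤ 1 - lam) hlam0 (by ring)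
    have i2 := conc.2 hmema hmemb hlam0 (by linarith : (0:ℝ) ≤ 1 - lam) (by ring)
    simp only [smul_eq_mul] at i1 i2
    rw [e1] at i1
    rw [e2] at i2
    linarith

lemma sum_rpow_submod {I : Type*} [DecidableEq I] {θ : ℝ} (h0 : 0 < θ) (h1 : θ < 1)
    (μ : I → ℝ) (hμ : ∀ i, 0 ≤ μ i) (E E' : Finset I) :
    (∑ i ∈ E ∪ E', μ i) ^ θ + (∑ i ∈ E ∩ E', μ i) ^ θ ≤
      (∑ i ∈ E, μ i) ^ θ + (∑ i ∈ E', μ i) ^ θ := by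
  have key : (∑ i ∈ E ∪ E', μ i) + (∑ i ∈ E ∩ E', μ i)
      = (∑ i ∈ E, μ i) + (∑ i ∈ E', μ i) := Finset.sum_union_inter
  have h0a : 0 ≤ ∑ i ∈ E ∩ E', μ i := Finset.sum_nonneg fun i _ => hμ i
  have hab : ∑ i ∈ E ∩ E', μ i ≤ ∑ i ∈ E, μ i :=
    Finset.sum_le_sum_of_subset_of_nonneg (Finset.inter_subset_left) (fun i _ _ => hμ i)
  have hδ : 0 ≤ (∑ i ∈ E', μ i) - ∑ i ∈ E ∩ E', μ i := by
    have : ∑ i ∈ E ∩ E', μ i ≤ ∑ i ∈ E', μ i :=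
      Finset.sum_le_sum_of_subset_of_nonneg (Finset.inter_subset_right) (fun i _ _ => hμ i)
    linarith
  have := concave_four h0 h1 h0a hab hδ
  have e1 : (∑ i ∈ E, μ i) + ((∑ i ∈ E', μ i) - ∑ i ∈ E ∩ E', μ i) = ∑ i ∈ E ∪ E', μ i := by
    linarith
  have e2 : (∑ i ∈ E ∩ E', μ i) + ((∑ i ∈ E', μ i) - ∑ i ∈ E ∩ E', μ i) = ∑ i ∈ E', μ i := by
    ring
  rw [e1, e2] at this
  linarith


lemma core_split {I J : Type*} [DecidableEq I] [DecidableEq J]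
    (c : I × J → ℝ)
    (φ : Finset I → ℝ) (ψ : Finset J → ℝ)
    (hφ0 : ∀ E, 0 ≤ φ E) (hψ0 : ∀ F, 0 ≤ ψ F)
    (hφsub : ∀ E E', φ (E ∪ E') + φ (E ∩ E') ≤ φ E + φ E')
    (hψsub : ∀ F F', ψ (F ∪ F') + ψ (F ∩ F') ≤ ψ F + ψ F') :
    ∀ (k : ℕ) (M₀ : Finset I) (N₀ : Finset J), M₀.card + N₀.card ≤ k →
    (∀ E F, E ⊆ M₀ → F ⊆ N₀ → E.Nonempty → F.Nonempty →
      ∑ x ∈ E ×ˢ F, c x ≤ max (φ E) (ψ F)) →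
    ∃ A, A ⊆ M₀ ×ˢ N₀ ∧
      (∀ E, E ⊆ M₀ → ∑ x ∈ A.filter (fun x => x.1 ∈ E), c x ≤ φ E) ∧
      (∀ F, F ⊆ N₀ → ∑ x ∈ (M₀ ×ˢ F) \ A, c x ≤ ψ F) := by
  intro k
  induction k with
  | zero =>
    intro M₀ N₀ hk _
    have hM : M₀ = ∅ := card_eq_zero.mp (Nat.le_zero.mp (le_trans (Nat.le_add_right _ _) hk))
    subst hM
    refine ⟨∅, empty_subset _, ?_, ?_⟩
    · intro E _; rw [filter_empty, sum_empty]; exact hφ0 E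
    · intro F _; rw [sdiff_empty, empty_product, sum_empty]; exact hψ0 F
  | succ k ih =>
    intro M₀ N₀ hk hH
    by_cases h1 : ∀ E, E ⊆ M₀ → ∑ x ∈ E ×ˢ N₀, c x ≤ φ E
    · refine ⟨M₀ ×ˢ N₀, Subset.rfl, ?_, ?_⟩
      · intro E hE
        have heq : (M₀ ×ˢ N₀).filter (fun x => x.1 ∈ E) = E ×ˢ N₀ := by
          ext x
          simp only [mem_filter, mem_product]
          exact ⟨fun h => ⟨h.2, h.1.2⟩, fun h => ⟨⟨hE h.1, h.2⟩, h.1⟩⟩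
        rw [heq]; exact h1 E hE
      · intro F hF
        have heq : (M₀ ×ˢ F) \ (M₀ ×ˢ N₀) = ∅ :=
          sdiff_eq_empty_iff_subset.mpr (product_subset_product Subset.rfl hF)
        rw [heq, sum_empty]; exact hψ0 F
    · by_cases h2 : ∀ F, F ⊆ N₀ → ∑ x ∈ M₀ ×ˢ F, c x ≤ ψ F
      · refine ⟨∅, empty_subset _, ?_, ?_⟩
        · intro E _; rw [filter_empty, sum_empty]; exact hφ0 E
        · intro F hF; rw [sdiff_empty]; exact h2 F hF
      · push_neg at h1 h2
        obtain ⟨E₀, hE₀sub, hE₀⟩ := h1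
        obtain ⟨F₀, hF₀sub, hF₀⟩ := h2
        obtain ⟨E₁, hE₁mem, hE₁max⟩ := (M₀.powerset).exists_max_image
          (fun E => ∑ x ∈ E ×ˢ N₀, c x - φ E) ⟨∅, mem_powerset.mpr (empty_subset _)⟩
        obtain ⟨F₁, hF₁mem, hF₁max⟩ := (N₀.powerset).exists_max_image
          (fun F => ∑ x ∈ M₀ ×ˢ F, c x - ψ F) ⟨∅, mem_powerset.mpr (empty_subset _)⟩
        have hE₁sub : E₁ ⊆ M₀ := mem_powerset.mp hE₁mem
        have hF₁sub : F₁ ⊆ N₀ := mem_powerset.mp hF₁mem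
        have hE₁pos : 0 < ∑ x ∈ E₁ ×ˢ N₀, c x - φ E₁ := by
          have := hE₁max E₀ (mem_powerset.mpr hE₀sub)
          linarith
        have hF₁pos : 0 < ∑ x ∈ M₀ ×ˢ F₁, c x - ψ F₁ := by
          have := hF₁max F₀ (mem_powerset.mpr hF₀sub)
          linarith
        by_cases hEM : E₁ = M₀
        · by_cases hFN : F₁ = N₀
          · exfalso
            subst hEM; subst hFN
            have hMne : E₁.Nonempty := by
              rcases E₁.eq_empty_or_nonempty with h | h
              · exfalso
                rw [h, empty_product, sum_empty] at hE₁pos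
                linarith [hφ0 (∅ : Finset I)]
              · exact h
            have hNne : F₁.Nonempty := by
              rcases F₁.eq_empty_or_nonempty with h | h
              · exfalso
                rw [h, product_empty, sum_empty] at hE₁pos
                linarith [hφ0 E₁]
              · exact h
            have h := hH E₁ F₁ Subset.rfl Subset.rfl hMne hNne
            rcases le_max_iff.mp h with h' | h'
            · linarith
            · linarith
          · -- column recursion on (M₀, F₁)
            have hcard : M₀.card + F₁.card ≤ k := by
              have : F₁.card < N₀.card := card_lt_card (ssubset_of_subset_of_ne hF₁sub hFN)
              omega
            obtain ⟨A', hA'sub, hA'row, hA'col⟩ := ih M₀ F₁ hcard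
              (fun E F hE hF hEne hFne => hH E F hE (hF.trans hF₁sub) hEne hFne)
            refine ⟨A', hA'sub.trans (product_subset_product Subset.rfl hF₁sub), hA'row, ?_⟩
            intro F hF
            have hdecomp : (M₀ ×ˢ F) \ A' = ((M₀ ×ˢ (F ∩ F₁)) \ A') ∪ (M₀ ×ˢ (F \ F₁)) := by
              ext x
              simp only [mem_sdiff, mem_union, mem_product, mem_inter]
              constructor
              · rintro ⟨⟨h1x, h2x⟩, h3x⟩
                by_cases hx : x.2 ∈ F₁
                · exact Or.inl ⟨⟨h1x, h2x, hx⟩, h3x⟩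
                · exact Or.inr ⟨h1x, h2x, hx⟩
              · rintro (⟨⟨h1x, h2x, _⟩, h3x⟩ | ⟨h1x, h2x, hx⟩)
                · exact ⟨⟨h1x, h2x⟩, h3x⟩
                · exact ⟨⟨h1x, h2x⟩, fun hA => hx (mem_product.mp (hA'sub hA)).2⟩
            have hdisj : Disjoint ((M₀ ×ˢ (F ∩ F₁)) \ A') (M₀ ×ˢ (F \ F₁)) := by
              rw [disjoint_left]
              intro x hx hx'
              have h1x := (mem_product.mp (mem_sdiff.mp hx).1).2
              have h2x := (mem_product.mp hx').2
              exact (mem_sdiff.mp h2x).2 (mem_inter.mp h1x).2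
            rw [hdecomp, sum_union hdisj]
            have t1 : ∑ x ∈ (M₀ ×ˢ (F ∩ F₁)) \ A', c x ≤ ψ (F ∩ F₁) :=
              hA'col (F ∩ F₁) inter_subset_right
            have t2 : ∑ x ∈ M₀ ×ˢ (F \ F₁), c x ≤ ψ (F ∪ F₁) - ψ F₁ := by
              have hmax := hF₁max (F ∪ F₁) (mem_powerset.mpr (union_subset hF hF₁sub))
              have hsplit : (M₀ ×ˢ (F ∪ F₁)) = (M₀ ×ˢ F₁) ∪ (M₀ ×ˢ (F \ F₁)) := by
                rw [← product_union, union_sdiff_self_eq_union, union_comm]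
              have hd : Disjoint (M₀ ×ˢ F₁) (M₀ ×ˢ (F \ F₁)) := by
                rw [disjoint_left]
                intro x hx hx'
                exact (mem_sdiff.mp (mem_product.mp hx').2).2 (mem_product.mp hx).2
              rw [hsplit, sum_union hd] at hmax
              linarith
            have hsubmod := hψsub F F₁
            linarith
        · -- row recursion on (E₁, N₀)
          have hcard : E₁.card + N₀.card ≤ k := by
            have : E₁.card < M₀.card := card_lt_card (ssubset_of_subset_of_ne hE₁sub hEM)
            omega
          obtain ⟨A', hA'sub, hA'row, hA'col⟩ := ih E₁ N₀ hcard
            (fun E F hE hF hEne hFne => hH E F (hE.trans hE₁sub) hF hEne hFne)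
          refine ⟨A' ∪ (M₀ \ E₁) ×ˢ N₀, ?_, ?_, ?_⟩
          · exact union_subset (hA'sub.trans (product_subset_product hE₁sub Subset.rfl))
              (product_subset_product sdiff_subset Subset.rfl)
          · intro E hE
            have hAfilter : ((A' ∪ (M₀ \ E₁) ×ˢ N₀).filter (fun x => x.1 ∈ E)) =
                (A'.filter (fun x => x.1 ∈ E ∩ E₁)) ∪ ((E \ E₁) ×ˢ N₀) := by
              ext x
              simp only [mem_filter, mem_union, mem_product, mem_inter, mem_sdiff]
              constructor
              · rintro ⟨hx | ⟨⟨hxM, hxE₁⟩, hxN⟩, hxE⟩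
                · exact Or.inl ⟨hx, hxE, (mem_product.mp (hA'sub hx)).1⟩
                · exact Or.inr ⟨⟨hxE, hxE₁⟩, hxN⟩
              · rintro (⟨hx, hxE, _⟩ | ⟨⟨hxE, hxE₁⟩, hxN⟩)
                · exact ⟨Or.inl hx, hxE⟩
                · exact ⟨Or.inr ⟨⟨hE hxE, hxE₁⟩, hxN⟩, hxE⟩
            have hdisj : Disjoint (A'.filter (fun x => x.1 ∈ E ∩ E₁)) ((E \ E₁) ×ˢ N₀) := by
              rw [disjoint_left]
              intro x hx hx'
              have h1x := (mem_product.mp (hA'sub (mem_filter.mp hx).1)).1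
              exact (mem_sdiff.mp (mem_product.mp hx').1).2 h1x
            rw [hAfilter, sum_union hdisj]
            have t1 : ∑ x ∈ A'.filter (fun x => x.1 ∈ E ∩ E₁), c x ≤ φ (E ∩ E₁) :=
              hA'row (E ∩ E₁) inter_subset_right
            have t2 : ∑ x ∈ (E \ E₁) ×ˢ N₀, c x ≤ φ (E ∪ E₁) - φ E₁ := by
              have hmax := hE₁max (E ∪ E₁) (mem_powerset.mpr (union_subset hE hE₁sub))
              have hsplit : ((E ∪ E₁) ×ˢ N₀) = (E₁ ×ˢ N₀) ∪ ((E \ E₁) ×ˢ N₀) := by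
                rw [← union_product, union_sdiff_self_eq_union, union_comm]
              have hd : Disjoint (E₁ ×ˢ N₀) ((E \ E₁) ×ˢ N₀) := by
                rw [disjoint_left]
                intro x hx hx'
                exact (mem_sdiff.mp (mem_product.mp hx').1).2 (mem_product.mp hx).1
              rw [hsplit, sum_union hd] at hmax
              linarith
            have hsubmod := hφsub E E₁
            linarith
          · intro F hF
            have heq : (M₀ ×ˢ F) \ (A' ∪ (M₀ \ E₁) ×ˢ N₀) = (E₁ ×ˢ F) \ A' := by
              ext x
              simp only [mem_sdiff, mem_union, mem_product, not_or]
              constructor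
              · rintro ⟨⟨hxM, hxF⟩, hxA', hxP⟩
                have hxE₁ : x.1 ∈ E₁ := by
                  by_contra h
                  exact hxP ⟨⟨hxM, h⟩, hF hxF⟩
                exact ⟨⟨hxE₁, hxF⟩, hxA'⟩
              · rintro ⟨⟨hxE₁, hxF⟩, hxA'⟩
                exact ⟨⟨hE₁sub hxE₁, hxF⟩, hxA', fun h => h.1.2 hxE₁⟩
            rw [heq]
            exact hA'col F hF



/-- The weak-`ℓ^p` (Lorentz `ℓ^{p,∞}`) quasinorm of `g` on the weighted space
`(Fin m, μ)`, via the distribution function: `sup_{s>0} s · μ({|g| > s})^{1/p}`. -/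
noncomputable def weakLpNorm {m : ℕ} (μ : Fin m → ℝ) (p : ℝ) (g : Fin m → ℝ) : ℝ :=
  sSup {x : ℝ | ∃ s : ℝ, 0 < s ∧
    x = s * (∑ i ∈ Finset.univ.filter fun i => s < |g i|, μ i) ^ (1 / p)}

/-- Proposition 2.1: if `|||a|||_{p,t} ≤ 1`, i.e. for all nonempty
`E, F` one has `(μ(E)^{1/p*} ∨ t⁻¹ν(F)^{1/p*})⁻¹ ∑_{E×F}|a| μ ν ≤ 1`, then
`M × N` splits into `A ∪ B` with `‖1_A·a‖_{ℓ^{p,∞}_m(ℓ^1_n)} ≤ 1` and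
`‖(1_B·a)ᵀ‖_{ℓ^{p,∞}_n(ℓ^1_m)} ≤ 1/t`. -/
theorem splitting_lemma_weakLp (m n : ℕ) (μ : Fin m → ℝ) (ν : Fin n → ℝ)
    (hμ : ∀ i, 0 < μ i) (hν : ∀ j, 0 < ν j) (t : ℝ) (ht : 0 < t)
    (p ps : ℝ) (hp : 1 < p) (hps : 1 / p + 1 / ps = 1)
    (a : Fin m × Fin n → ℝ)
    (ha : ∀ (E : Finset (Fin m)) (F : Finset (Fin n)), E.Nonempty → F.Nonempty →
      (max ((∑ i ∈ E, μ i) ^ (1 / ps)) (t⁻¹ * (∑ j ∈ F, ν j) ^ (1 / ps)))⁻¹ *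
        ∑ i ∈ E, ∑ j ∈ F, |a (i, j)| * μ i * ν j ≤ 1) :
    ∃ A B : Finset (Fin m × Fin n), Disjoint A B ∧ A ∪ B = Finset.univ ∧
      weakLpNorm μ p
        (fun i => ∑ j : Fin n, (if (i, j) ∈ A then |a (i, j)| * ν j else 0)) ≤ 1 ∧
      weakLpNorm ν p
        (fun j => ∑ i : Fin m, (if (i, j) ∈ B then |a (i, j)| * μ i else 0)) ≤ 1 / t := by
  have hp0 : (0:ℝ) < p := by linarith
  have h1p : (0:ℝ) < 1 / p := by positivity
  have h1p1 : 1 / p < 1 := by rw [div_lt_one hp0]; exact hp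
  have hθpos : (0:ℝ) < 1 / ps := by linarith
  have hθlt : (1:ℝ) / ps < 1 := by linarith
  set c : Fin m × Fin n → ℝ := fun x => |a x| * μ x.1 * ν x.2 with hcdef
  set φ : Finset (Fin m) → ℝ := fun E => (∑ i ∈ E, μ i) ^ ((1:ℝ) / ps) with hφdef
  set ψ : Finset (Fin n) → ℝ := fun F => t⁻¹ * (∑ j ∈ F, ν j) ^ ((1:ℝ) / ps) with hψdef
  have hφ0 : ∀ E, 0 ≤ φ E := fun E =>
    Real.rpow_nonneg (sum_nonneg fun i _ => (hμ i).le) _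
  have hψ0 : ∀ F, 0 ≤ ψ F := fun F =>
    mul_nonneg (inv_nonneg.mpr ht.le) (Real.rpow_nonneg (sum_nonneg fun j _ => (hν j).le) _)
  have hφsub : ∀ E E', φ (E ∪ E') + φ (E ∩ E') ≤ φ E + φ E' := fun E E' =>
    sum_rpow_submod hθpos hθlt μ (fun i => (hμ i).le) E E'
  have hψsub : ∀ F F', ψ (F ∪ F') + ψ (F ∩ F') ≤ ψ F + ψ F' := by
    intro F F'
    have h := sum_rpow_submod hθpos hθlt ν (fun j => (hν j).le) F F'
    have ht0 : (0:ℝ) ≤ t⁻¹ := inv_nonneg.mpr ht.le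
    simp only [hψdef]
    nlinarith
  have hH : ∀ (E : Finset (Fin m)) (F : Finset (Fin n)), E ⊆ Finset.univ → F ⊆ Finset.univ →
      E.Nonempty → F.Nonempty → ∑ x ∈ E ×ˢ F, c x ≤ max (φ E) (ψ F) := by
    intro E F _ _ hEne hFne
    have hφpos : 0 < φ E := Real.rpow_pos_of_pos (sum_pos (fun i _ => hμ i) hEne) _
    have hmaxpos : 0 < max (φ E) (ψ F) := lt_of_lt_of_le hφpos (le_max_left _ _)
    have h := ha E F hEne hFne
    rw [inv_mul_le_iff₀ hmaxpos, mul_one] at h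
    rw [Finset.sum_product]
    exact h
  obtain ⟨A, hAsub, hArow, hAcol⟩ := core_split c φ ψ hφ0 hψ0 hφsub hψsub
    ((Finset.univ : Finset (Fin m)).card + (Finset.univ : Finset (Fin n)).card)
    Finset.univ Finset.univ le_rfl hH
  refine ⟨A, Aᶜ, disjoint_compl_right, by simp, ?_, ?_⟩
  · -- first weak norm bound
    apply Real.sSup_le _ zero_le_one
    rintro x ⟨s, hs, rfl⟩
    set G : Fin m → ℝ := fun i => ∑ j : Fin n, (if (i, j) ∈ A then |a (i, j)| * ν j else 0)
      with hGdef
    set E : Finset (Fin m) := Finset.univ.filter (fun i => s < |G i|) with hEdef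
    have hG0 : ∀ i, 0 ≤ G i := by
      intro i
      apply Finset.sum_nonneg
      intro j _
      by_cases hij : (i, j) ∈ A
      · rw [if_pos hij]; exact mul_nonneg (abs_nonneg _) (hν j).le
      · rw [if_neg hij]
    rcases E.eq_empty_or_nonempty with hEe | hEne
    · rw [hEe, sum_empty, Real.zero_rpow (by positivity : (1:ℝ)/p ≠ 0), mul_zero]
      exact zero_le_one
    · have hT : 0 < ∑ i ∈ E, μ i := sum_pos (fun i _ => hμ i) hEne
      have key : s * ∑ i ∈ E, μ i ≤ (∑ i ∈ E, μ i) ^ ((1:ℝ)/ps) := by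
        have step1 : s * ∑ i ∈ E, μ i ≤ ∑ i ∈ E, G i * μ i := by
          rw [mul_sum]
          apply sum_le_sum
          intro i hi
          have hlt : s < |G i| := (mem_filter.mp hi).2
          rw [abs_of_nonneg (hG0 i)] at hlt
          exact mul_le_mul_of_nonneg_right hlt.le (hμ i).le
        have step2 : ∑ i ∈ E, G i * μ i = ∑ x ∈ A.filter (fun x => x.1 ∈ E), c x := by
          have e1 : ∀ i, G i * μ i = ∑ j : Fin n, (if (i, j) ∈ A then c (i, j) else 0) := by
            intro i
            simp only [hGdef]
            rw [Finset.sum_mul]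
            apply Finset.sum_congr rfl
            intro j _
            by_cases hij : (i, j) ∈ A
            · rw [if_pos hij, if_pos hij]; simp only [hcdef]; ring
            · rw [if_neg hij, if_neg hij, zero_mul]
          calc ∑ i ∈ E, G i * μ i
              = ∑ i ∈ E, ∑ j : Fin n, (if (i, j) ∈ A then c (i, j) else 0) :=
                Finset.sum_congr rfl (fun i _ => e1 i)
            _ = ∑ x ∈ E ×ˢ Finset.univ, (if x ∈ A then c x else 0) := by
                rw [Finset.sum_product]
            _ = ∑ x ∈ (E ×ˢ Finset.univ) ∩ A, c x := Finset.sum_ite_mem _ _ _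
            _ = ∑ x ∈ A.filter (fun x => x.1 ∈ E), c x := by
                apply Finset.sum_congr _ (fun _ _ => rfl)
                ext x
                simp only [mem_inter, mem_product, mem_univ, and_true, mem_filter]
                tauto
        calc s * ∑ i ∈ E, μ i ≤ ∑ i ∈ E, G i * μ i := step1
          _ = ∑ x ∈ A.filter (fun x => x.1 ∈ E), c x := step2
          _ ≤ φ E := hArow E (subset_univ E)
      have hs' : s ≤ (∑ i ∈ E, μ i) ^ ((1:ℝ)/ps - 1) := by
        rw [Real.rpow_sub hT, Real.rpow_one, le_div_iff₀ hT]
        exact key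
      calc s * (∑ i ∈ E, μ i) ^ (1/p)
          ≤ (∑ i ∈ E, μ i) ^ ((1:ℝ)/ps - 1) * (∑ i ∈ E, μ i) ^ (1/p) :=
            mul_le_mul_of_nonneg_right hs' (Real.rpow_nonneg hT.le _)
        _ = (∑ i ∈ E, μ i) ^ ((1:ℝ)/ps - 1 + 1/p) := (Real.rpow_add hT _ _).symm
        _ = 1 := by
            rw [show (1:ℝ)/ps - 1 + 1/p = 0 by linarith, Real.rpow_zero]
  · -- second weak norm bound
    apply Real.sSup_le _ (by positivity)
    rintro x ⟨s, hs, rfl⟩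
    set H : Fin n → ℝ := fun j => ∑ i : Fin m, (if (i, j) ∈ Aᶜ then |a (i, j)| * μ i else 0)
      with hHdef
    set F : Finset (Fin n) := Finset.univ.filter (fun j => s < |H j|) with hFdef
    have hH0 : ∀ j, 0 ≤ H j := by
      intro j
      apply Finset.sum_nonneg
      intro i _
      by_cases hij : (i, j) ∈ Aᶜ
      · rw [if_pos hij]; exact mul_nonneg (abs_nonneg _) (hμ i).le
      · rw [if_neg hij]
    rcases F.eq_empty_or_nonempty with hFe | hFne
    · rw [hFe, sum_empty, Real.zero_rpow (by positivity : (1:ℝ)/p ≠ 0), mul_zero]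
      positivity
    · have hT : 0 < ∑ j ∈ F, ν j := sum_pos (fun j _ => hν j) hFne
      have key : s * ∑ j ∈ F, ν j ≤ t⁻¹ * (∑ j ∈ F, ν j) ^ ((1:ℝ)/ps) := by
        have step1 : s * ∑ j ∈ F, ν j ≤ ∑ j ∈ F, H j * ν j := by
          rw [mul_sum]
          apply sum_le_sum
          intro j hj
          have hlt : s < |H j| := (mem_filter.mp hj).2
          rw [abs_of_nonneg (hH0 j)] at hlt
          exact mul_le_mul_of_nonneg_right hlt.le (hν j).le
        have step2 : ∑ j ∈ F, H j * ν j = ∑ x ∈ (Finset.univ ×ˢ F) \ A, c x := by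
          have e1 : ∀ j, H j * ν j = ∑ i : Fin m, (if (i, j) ∈ Aᶜ then c (i, j) else 0) := by
            intro j
            simp only [hHdef]
            rw [Finset.sum_mul]
            apply Finset.sum_congr rfl
            intro i _
            by_cases hij : (i, j) ∈ Aᶜ
            · rw [if_pos hij, if_pos hij]
            · rw [if_neg hij, if_neg hij, zero_mul]
          calc ∑ j ∈ F, H j * ν j
              = ∑ j ∈ F, ∑ i : Fin m, (if (i, j) ∈ Aᶜ then c (i, j) else 0) :=
                Finset.sum_congr rfl (fun j _ => e1 j)
            _ = ∑ x ∈ (Finset.univ : Finset (Fin m)) ×ˢ F, (if x ∈ Aᶜ then c x else 0) := by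
                rw [Finset.sum_product_right]
            _ = ∑ x ∈ ((Finset.univ : Finset (Fin m)) ×ˢ F) ∩ Aᶜ, c x :=
                Finset.sum_ite_mem _ _ _
            _ = ∑ x ∈ (Finset.univ ×ˢ F) \ A, c x := by
                apply Finset.sum_congr _ (fun _ _ => rfl)
                ext x
                simp only [mem_inter, mem_compl, mem_sdiff]
        calc s * ∑ j ∈ F, ν j ≤ ∑ j ∈ F, H j * ν j := step1
          _ = ∑ x ∈ (Finset.univ ×ˢ F) \ A, c x := step2
          _ ≤ ψ F := hAcol F (subset_univ F)
      have hs' : s ≤ t⁻¹ * (∑ j ∈ F, ν j) ^ ((1:ℝ)/ps - 1) := by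
        have h := (le_div_iff₀ hT).mpr key
        rw [Real.rpow_sub hT, Real.rpow_one, mul_div_assoc] at *
        exact h
      calc s * (∑ j ∈ F, ν j) ^ (1/p)
          ≤ (t⁻¹ * (∑ j ∈ F, ν j) ^ ((1:ℝ)/ps - 1)) * (∑ j ∈ F, ν j) ^ (1/p) :=
            mul_le_mul_of_nonneg_right hs' (Real.rpow_nonneg hT.le _)
        _ = t⁻¹ * ((∑ j ∈ F, ν j) ^ ((1:ℝ)/ps - 1) * (∑ j ∈ F, ν j) ^ (1/p)) := by ring
        _ = t⁻¹ * (∑ j ∈ F, ν j) ^ ((1:ℝ)/ps - 1 + 1/p) := by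
            rw [Real.rpow_add hT]
        _ = 1 / t := by
            rw [show (1:ℝ)/ps - 1 + 1/p = 0 by linarith, Real.rpow_zero, mul_one, one_div]
end

section
/- Let M = Fin m, N = Fin n with positive weights μ, ν, t > 0, and 1 ≤ q < p ≤ ∞; set α = 1/q − 1/p and C(p,q) = (1 − q/p)^{1/q}. Let K_{p,q,t}(a) be the K_t-functional of the couple (ℓ^{p,∞}_m(ℓ^q_n), ℓ^{p,∞}_n(ℓ^q_m)) and |||a|||_{p,q,t} = sup over nonempty E ⊆ M, F ⊆ N of (μ(E)^α ∨ t⁻¹ν(F)^α)⁻¹ (∑_{(i,j)∈E×F} |a(i,j)|^q μ_i ν_j)^{1/q}. Then C(p,q) |||a|||_{p,q,t} ≤ K_{p,q,t}(a) ≤ 2 |||a|||_{p,q,t}. Moreover, if |||a|||_{p,q,t} ≤ 1 there is a partition M × N = A ∪ B with ‖1_A · a‖_{ℓ^{p,∞}_m(ℓ^q_n)} ≤ 1 and ‖(1_B · a)^⊤‖_{ℓ^{p,∞}_n(ℓ^q_m)} ≤ 1/t. -/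
open Finset

/-- The `ℓ^{p,∞}_m(ℓ^q_n)`-quasinorm of a matrix `a`: the weak-`ℓ^p` quasinorm
(w.r.t. `μ`) of `i ↦ (∑_j |a(i,j)|^q ν_j)^{1/q}`. -/
noncomputable def mixedNorm (m n : ℕ) (μ : Fin m → ℝ) (ν : Fin n → ℝ) (p q : ℝ)
    (a : Fin m × Fin n → ℝ) : ℝ :=
  weakLpNorm μ p (fun i => (∑ j : Fin n, |a (i, j)| ^ q * ν j) ^ (1 / q))

/-- The norm `|||a|||_{p,q,t}` with `α = 1/q - 1/p`. -/
noncomputable def tripleNormPQ (m n : ℕ) (μ : Fin m → ℝ) (ν : Fin n → ℝ) (q α t : ℝ)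
    (a : Fin m × Fin n → ℝ) : ℝ :=
  sSup {x : ℝ | ∃ (E : Finset (Fin m)) (F : Finset (Fin n)), E.Nonempty ∧ F.Nonempty ∧
    x = (max ((∑ i ∈ E, μ i) ^ α) (t⁻¹ * (∑ j ∈ F, ν j) ^ α))⁻¹ *
      (∑ i ∈ E, ∑ j ∈ F, |a (i, j)| ^ q * μ i * ν j) ^ (1 / q)}

/-- The `K_t`-functional of the couple `(ℓ^{p,∞}_m(ℓ^q_n), ℓ^{p,∞}_n(ℓ^q_m))`. -/
noncomputable def KtPQ (m n : ℕ) (μ : Fin m → ℝ) (ν : Fin n → ℝ) (p q t : ℝ)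
    (a : Fin m × Fin n → ℝ) : ℝ :=
  sInf {x : ℝ | ∃ b c : Fin m × Fin n → ℝ, a = b + c ∧
    x = mixedNorm m n μ ν p q b + t * mixedNorm n m ν μ p q (fun z => c (z.2, z.1))}

lemma key_concave {x y γ : ℝ} (hx : 0 ≤ x) (hxy : x ≤ y) (hγ : 0 < γ) (hγ1 : γ < 1) :
    γ * ((y - x) * y ^ (γ - 1)) ≤ y ^ γ - x ^ γ := by
  rcases eq_or_lt_of_le (hx.trans hxy) with h0 | hy0
  · have hx0 : x = 0 := le_antisymm (hxy.trans h0.ge) hx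
    rw [← h0, hx0]
    rw [Real.zero_rpow (by linarith), Real.zero_rpow hγ.ne']
    simp
  · set r : ℝ := x / y with hr
    have hr0 : 0 ≤ r := div_nonneg hx hy0.le
    have hr1 : r ≤ 1 := (div_le_one hy0).mpr hxy
    have hbern : r ^ γ ≤ γ * r + (1 - γ) * 1 := by
      calc r ^ γ = r ^ γ * 1 ^ (1 - γ) := by rw [Real.one_rpow, mul_one]
      _ ≤ γ * r + (1 - γ) * 1 :=
        Real.geom_mean_le_arith_mean2_weighted hγ.le (by linarith) hr0 zero_le_one (by ring)
    have hxr : x = r * y := by rw [hr, div_mul_cancel₀ x hy0.ne']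
    have hxγ : x ^ γ = r ^ γ * y ^ γ := by
      rw [hxr, Real.mul_rpow hr0 hy0.le]
    have hyγ : y ^ (γ - 1) * y = y ^ γ := by
      rw [show y ^ (γ-1) * y = y ^ (γ-1) * y ^ (1:ℝ) by rw [Real.rpow_one],
        ← Real.rpow_add hy0]
      ring_nf
    have hyγ0 : 0 ≤ y ^ γ := Real.rpow_nonneg hy0.le γ
    have hexp : (y - x) * y ^ (γ - 1) = (1 - r) * y ^ γ := by
      rw [← hyγ, hxr]; ring
    rw [hexp, hxγ]
    nlinarith [hbern, hyγ0]
variable {m n : ℕ}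

lemma weakLp_zero_mem (μ : Fin m → ℝ) {p : ℝ} (hp : 0 < p) (g : Fin m → ℝ) :
    (0:ℝ) ∈ {x : ℝ | ∃ s : ℝ, 0 < s ∧
      x = s * (∑ i ∈ Finset.univ.filter fun i => s < |g i|, μ i) ^ (1 / p)} := by
  refine ⟨1 + ∑ i, |g i|, by positivity, ?_⟩
  have hfil : (Finset.univ.filter fun i => (1 + ∑ i, |g i|) < |g i|) = ∅ := by
    apply Finset.filter_eq_empty_iff.mpr
    intro i _
    have h1 : |g i| ≤ ∑ i, |g i| :=
      Finset.single_le_sum (fun i _ => abs_nonneg (g i)) (mem_univ i)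
    push_neg
    linarith
  rw [hfil, Finset.sum_empty, Real.zero_rpow (one_div_ne_zero hp.ne'), mul_zero]

lemma weakLpNorm_bddAbove (μ : Fin m → ℝ) {p : ℝ} (hp : 0 < p) (hμ : ∀ i, 0 ≤ μ i)
    (g : Fin m → ℝ) :
    BddAbove {x : ℝ | ∃ s : ℝ, 0 < s ∧
      x = s * (∑ i ∈ Finset.univ.filter fun i => s < |g i|, μ i) ^ (1 / p)} := by
  refine ⟨(1 + ∑ i, |g i|) * (∑ i, μ i) ^ (1/p), ?_⟩
  rintro x ⟨s, hs, rfl⟩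
  rcases (Finset.univ.filter fun i => s < |g i|).eq_empty_or_nonempty with he | ⟨i0, hi0⟩
  · rw [he]
    rw [Finset.sum_empty, Real.zero_rpow (one_div_ne_zero hp.ne'), mul_zero]
    exact mul_nonneg (by positivity) (Real.rpow_nonneg (Finset.sum_nonneg fun i _ => hμ i) _)
  · have hi0' := Finset.mem_filter.mp hi0
    have h1 : |g i0| ≤ ∑ i, |g i| :=
      Finset.single_le_sum (fun i _ => abs_nonneg (g i)) (mem_univ i0)
    have hsle : s ≤ 1 + ∑ i, |g i| := by linarith [hi0'.2]
    have h2 : (∑ i ∈ Finset.univ.filter fun i => s < |g i|, μ i) ^ (1/p)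
        ≤ (∑ i, μ i) ^ (1/p) := by
      apply Real.rpow_le_rpow (Finset.sum_nonneg fun i _ => hμ i)
        (Finset.sum_le_sum_of_subset_of_nonneg (Finset.filter_subset _ _)
          (fun i _ _ => hμ i)) (by positivity)
    exact mul_le_mul hsle h2 (Real.rpow_nonneg (Finset.sum_nonneg fun i _ => hμ i) _) (by positivity)

lemma weakLpNorm_nonneg (μ : Fin m → ℝ) {p : ℝ} (hp : 0 < p) (hμ : ∀ i, 0 ≤ μ i)
    (g : Fin m → ℝ) : 0 ≤ weakLpNorm μ p g :=
  le_csSup (weakLpNorm_bddAbove μ hp hμ g) (weakLp_zero_mem μ hp g)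

lemma le_weakLpNorm (μ : Fin m → ℝ) {p : ℝ} (hp : 0 < p) (hμ : ∀ i, 0 ≤ μ i)
    (g : Fin m → ℝ) {s : ℝ} (hs : 0 < s) :
    s * (∑ i ∈ Finset.univ.filter fun i => s < |g i|, μ i) ^ (1 / p) ≤ weakLpNorm μ p g :=
  le_csSup (weakLpNorm_bddAbove μ hp hμ g) ⟨s, hs, rfl⟩

lemma weakLpNorm_le (μ : Fin m → ℝ) {p : ℝ} (g : Fin m → ℝ) {C : ℝ}
    (h : ∀ s : ℝ, 0 < s →
      s * (∑ i ∈ Finset.univ.filter fun i => s < |g i|, μ i) ^ (1 / p) ≤ C) :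
    weakLpNorm μ p g ≤ C := by
  unfold weakLpNorm
  refine csSup_le ⟨(1:ℝ) * (∑ i ∈ Finset.univ.filter fun i => (1:ℝ) < |g i|, μ i) ^ (1/p),
    ⟨1, one_pos, rfl⟩⟩ ?_
  rintro x ⟨s, hs, rfl⟩
  exact h s hs

lemma sum_rpow_le_weak {m : ℕ} (μ : Fin m → ℝ) (hμ : ∀ i, 0 < μ i) (g : Fin m → ℝ)
    (hg : ∀ i, 0 ≤ g i) {p q W : ℝ} (hq : 0 < q) (hqp : q < p) (hW : 0 ≤ W)
    (h : ∀ s : ℝ, 0 < s →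
      s * (∑ i ∈ Finset.univ.filter fun i => s < g i, μ i) ^ (1 / p) ≤ W) :
    ∀ E : Finset (Fin m),
      (1 - q / p) * ∑ i ∈ E, g i ^ q * μ i ≤ W ^ q * (∑ i ∈ E, μ i) ^ (1 - q / p) := by
  have hp : 0 < p := hq.trans hqp
  have hγ : 0 < 1 - q / p := by
    have : q / p < 1 := (div_lt_one hp).mpr hqp
    linarith
  have hγ1 : 1 - q / p < 1 := by
    have : 0 < q / p := div_pos hq hp
    linarith
  set γ := 1 - q / p with hγdef
  intro E
  induction E using Finset.strongInduction with
  | _ E ih =>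
  rcases E.eq_empty_or_nonempty with rfl | hne
  · simp [Real.zero_rpow hγ.ne']
  · obtain ⟨i0, hi0, hmin⟩ := E.exists_min_image g hne
    set y := ∑ i ∈ E, μ i with hy
    set E' := E.erase i0 with hE'
    set x := ∑ i ∈ E', μ i with hx
    have hyx : x + μ i0 = y := Finset.sum_erase_add E μ hi0
    have hx0 : 0 ≤ x := Finset.sum_nonneg fun i _ => (hμ i).le
    have hμ0 := hμ i0
    have hy0 : 0 < y := by linarith
    have hc : 0 < y ^ (1/p) := Real.rpow_pos_of_pos hy0 _
    -- step 1 : g i0 * y^(1/p) ≤ W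
    have step1 : g i0 * y ^ (1/p) ≤ W := by
      rcases (hg i0).eq_or_lt with h0 | h0
      · rw [← h0, zero_mul]; exact hW
      · by_contra hcon
        push_neg at hcon
        set s := (W / y ^ (1/p) + g i0) / 2 with hs
        have hWc : 0 ≤ W / y ^ (1/p) := div_nonneg hW hc.le
        have h1 : W / y ^ (1/p) < g i0 := (div_lt_iff₀ hc).mpr hcon
        have hs0 : 0 < s := by rw [hs]; linarith
        have hslt : s < g i0 := by rw [hs]; linarith
        have hsub : E ⊆ Finset.univ.filter fun i => s < g i := by
          intro i hi
          exact Finset.mem_filter.mpr ⟨mem_univ i, hslt.trans_le (hmin i hi)⟩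
        have h2 : y ^ (1/p) ≤ (∑ i ∈ Finset.univ.filter fun i => s < g i, μ i) ^ (1/p) :=
          Real.rpow_le_rpow hy0.le
            (Finset.sum_le_sum_of_subset_of_nonneg hsub fun i _ _ => (hμ i).le)
            (by positivity)
        have h3 : s * y ^ (1/p) ≤ W :=
          le_trans (mul_le_mul_of_nonneg_left h2 hs0.le) (h s hs0)
        have : s ≤ W / y ^ (1/p) := (le_div_iff₀ hc).mpr h3
        rw [hs] at this; linarith
    -- step 2 : g i0 ^ q ≤ W^q * y^(γ-1)
    have step2 : g i0 ^ q ≤ W ^ q * y ^ (γ - 1) := by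
      have h1 : g i0 ≤ W * (y ^ (1/p))⁻¹ := by
        rw [← div_eq_mul_inv]; exact (le_div_iff₀ hc).mpr step1
      have h2 : g i0 ^ q ≤ (W * (y ^ (1/p))⁻¹) ^ q :=
        Real.rpow_le_rpow (hg i0) h1 hq.le
      calc g i0 ^ q ≤ (W * (y ^ (1/p))⁻¹) ^ q := h2
        _ = W ^ q * ((y ^ (1/p))⁻¹) ^ q :=
          Real.mul_rpow hW (by positivity)
        _ = W ^ q * ((y ^ (1/p)) ^ q)⁻¹ := by
          rw [Real.inv_rpow (Real.rpow_nonneg hy0.le _)]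
        _ = W ^ q * (y ^ ((1/p) * q))⁻¹ := by rw [← Real.rpow_mul hy0.le]
        _ = W ^ q * y ^ (-((1/p) * q)) := by rw [Real.rpow_neg hy0.le]
        _ = W ^ q * y ^ (γ - 1) := by
          congr 1
          rw [hγdef]
          ring_nf
    have hsplit : ∑ i ∈ E, g i ^ q * μ i = g i0 ^ q * μ i0 + ∑ i ∈ E', g i ^ q * μ i := by
      rw [hE', ← Finset.add_sum_erase E _ hi0]
    have key := key_concave hx0 (by linarith : x ≤ y) hγ hγ1
    have hyx' : y - x = μ i0 := by linarith
    rw [hyx'] at key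
    have hih := ih E' (Finset.erase_ssubset hi0)
    rw [hsplit]
    have hWq : 0 ≤ W ^ q := Real.rpow_nonneg hW q
    nlinarith [mul_le_mul_of_nonneg_right step2 hμ0.le, hih,
      mul_le_mul_of_nonneg_left key hWq, Real.rpow_nonneg hx0 γ]

lemma abs_filter_eq {m : ℕ} (g : Fin m → ℝ) (hg : ∀ i, 0 ≤ g i) (s : ℝ) :
    (Finset.univ.filter fun i => s < |g i|) = (Finset.univ.filter fun i => s < g i) := by
  apply Finset.filter_congr
  intro i _
  simp [abs_of_nonneg (hg i)]

lemma mixedNorm_nonneg (μ : Fin m → ℝ) (ν : Fin n → ℝ) (hμ : ∀ i, 0 ≤ μ i) {p : ℝ} (q : ℝ)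
    (hp : 0 < p) (a : Fin m × Fin n → ℝ) : 0 ≤ mixedNorm m n μ ν p q a :=
  weakLpNorm_nonneg μ hp hμ _

lemma mixedNorm_zero (μ : Fin m → ℝ) (ν : Fin n → ℝ) (hμ : ∀ i, 0 ≤ μ i) {p q : ℝ}
    (hp : 0 < p) (hq : 0 < q) (a : Fin m × Fin n → ℝ) (ha : ∀ z, a z = 0) :
    mixedNorm m n μ ν p q a = 0 := by
  refine le_antisymm ?_ (mixedNorm_nonneg μ ν hμ q hp a)
  apply weakLpNorm_le
  intro s hs
  have hgz : ∀ i : Fin m, (∑ j, |a (i, j)| ^ q * ν j) ^ (1 / q) = 0 := by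
    intro i
    have : ∀ j : Fin n, |a (i, j)| ^ q * ν j = 0 := by
      intro j; rw [ha (i, j), abs_zero, Real.zero_rpow hq.ne', zero_mul]
    rw [Finset.sum_congr rfl fun j _ => this j, Finset.sum_const, smul_zero,
      Real.zero_rpow (one_div_ne_zero hq.ne')]
  have hfil : (Finset.univ.filter fun i : Fin m =>
      s < |(∑ j, |a (i, j)| ^ q * ν j) ^ (1 / q)|) = ∅ := by
    apply Finset.filter_eq_empty_iff.mpr
    intro i _
    rw [hgz i, abs_zero]
    push_neg
    exact hs.le
  rw [hfil, Finset.sum_empty, Real.zero_rpow (one_div_ne_zero hp.ne'), mul_zero]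

lemma block_le (μ : Fin m → ℝ) (ν : Fin n → ℝ) (hμ : ∀ i, 0 < μ i)
    (hν : ∀ j, 0 ≤ ν j) {p q : ℝ} (hq : 0 < q) (hqp : q < p)
    (b : Fin m × Fin n → ℝ) (E : Finset (Fin m)) (F : Finset (Fin n)) :
    (1 - q / p) * ∑ i ∈ E, ∑ j ∈ F, |b (i, j)| ^ q * μ i * ν j ≤
      (mixedNorm m n μ ν p q b) ^ q * (∑ i ∈ E, μ i) ^ (1 - q / p) := by
  have hp : 0 < p := hq.trans hqp
  have hγ0 : (0:ℝ) ≤ 1 - q / p := by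
    have : q / p < 1 := (div_lt_one hp).mpr hqp
    linarith
  set g : Fin m → ℝ := fun i => (∑ j, |b (i, j)| ^ q * ν j) ^ (1 / q) with hgdef
  have hx0 : ∀ i, (0:ℝ) ≤ ∑ j, |b (i, j)| ^ q * ν j := fun i =>
    Finset.sum_nonneg fun j _ => mul_nonneg (Real.rpow_nonneg (abs_nonneg _) _) (hν j)
  have hg : ∀ i, 0 ≤ g i := fun i => Real.rpow_nonneg (hx0 i) _
  have hW : mixedNorm m n μ ν p q b = weakLpNorm μ p g := rfl
  have hWn : 0 ≤ weakLpNorm μ p g := weakLpNorm_nonneg μ hp (fun i => (hμ i).le) g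
  have hsw : ∀ s : ℝ, 0 < s →
      s * (∑ i ∈ Finset.univ.filter fun i => s < g i, μ i) ^ (1 / p) ≤ weakLpNorm μ p g := by
    intro s hs
    rw [← abs_filter_eq g hg s]
    exact le_weakLpNorm μ hp (fun i => (hμ i).le) g hs
  have h1 := sum_rpow_le_weak μ hμ g hg hq hqp hWn hsw E
  rw [hW]
  refine le_trans (mul_le_mul_of_nonneg_left ?_ hγ0) h1
  apply Finset.sum_le_sum
  intro i _
  have hgq : g i ^ q = ∑ j, |b (i, j)| ^ q * ν j := by
    rw [hgdef]
    dsimp only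
    rw [← Real.rpow_mul (hx0 i), one_div, inv_mul_cancel₀ hq.ne', Real.rpow_one]
  calc ∑ j ∈ F, |b (i, j)| ^ q * μ i * ν j
      = (∑ j ∈ F, |b (i, j)| ^ q * ν j) * μ i := by
        rw [Finset.sum_mul]
        exact Finset.sum_congr rfl fun j _ => by ring
    _ ≤ (∑ j, |b (i, j)| ^ q * ν j) * μ i :=
        mul_le_mul_of_nonneg_right
          (Finset.sum_le_sum_of_subset_of_nonneg (Finset.subset_univ F)
            (fun j _ _ => mul_nonneg (Real.rpow_nonneg (abs_nonneg _) _) (hν j))) (hμ i).le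
    _ = g i ^ q * μ i := by rw [hgq]

lemma part_aux {m n : ℕ} (μ : Fin m → ℝ) (ν : Fin n → ℝ) (hμ : ∀ i, 0 < μ i)
    (hν : ∀ j, 0 < ν j) (w : Fin m × Fin n → ℝ) (hw : ∀ z, 0 ≤ w z)
    (T Λ β : ℝ) (hT : 0 < T) (hΛ : 0 ≤ Λ) (hβ : β ≤ 1) :
    ∀ (k : ℕ) (S : Finset (Fin m)) (U : Finset (Fin n)), S.card + U.card ≤ k →
    (∀ E ⊆ S, ∀ F ⊆ U, E.Nonempty → F.Nonempty →
      ∑ i ∈ E, ∑ j ∈ F, w (i, j) * μ i * ν j ≤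
        Λ * max ((∑ i ∈ E, μ i) ^ β) (T⁻¹ * (∑ j ∈ F, ν j) ^ β)) →
    ∃ A B : Finset (Fin m × Fin n), Disjoint A B ∧ A ∪ B = S ×ˢ U ∧
      (∀ E ⊆ S, E.Nonempty → ∃ i ∈ E,
        ∑ j ∈ U.filter (fun j => (i, j) ∈ A), w (i, j) * ν j ≤
          Λ * (∑ i ∈ E, μ i) ^ (β - 1)) ∧
      (∀ F ⊆ U, F.Nonempty → ∃ j ∈ F,
        ∑ i ∈ S.filter (fun i => (i, j) ∈ B), w (i, j) * μ i ≤
          Λ * T⁻¹ * (∑ j ∈ F, ν j) ^ (β - 1)) := by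
  intro k
  induction k with
  | zero =>
    intro S U hcard _
    have hS : S = ∅ := Finset.card_eq_zero.mp (by omega)
    refine ⟨∅, ∅, Finset.disjoint_empty_left _, by simp [hS], ?_, ?_⟩
    · intro E hE hEne
      exact absurd (Finset.subset_empty.mp (hS ▸ hE)) hEne.ne_empty
    · intro F hF hFne
      obtain ⟨j, hj⟩ := hFne
      refine ⟨j, hj, ?_⟩
      have : S.filter (fun i => (i, j) ∈ (∅ : Finset (Fin m × Fin n))) = ∅ := by simp
      rw [this, Finset.sum_empty]
      have : (0:ℝ) < ∑ j ∈ F, ν j := Finset.sum_pos (fun j _ => hν j) ⟨j, hj⟩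
      positivity
  | succ k ih =>
    intro S U hcard hyp
    rcases S.eq_empty_or_nonempty with rfl | hSne
    · refine ⟨∅, ∅, Finset.disjoint_empty_left _, by simp, ?_, ?_⟩
      · intro E hE hEne
        exact absurd (Finset.subset_empty.mp hE) hEne.ne_empty
      · intro F hF hFne
        obtain ⟨j, hj⟩ := hFne
        refine ⟨j, hj, ?_⟩
        simp only [Finset.filter_empty, Finset.sum_empty]
        have : (0:ℝ) < ∑ j ∈ F, ν j := Finset.sum_pos (fun j _ => hν j) ⟨j, hj⟩
        positivity
    rcases U.eq_empty_or_nonempty with rfl | hUne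
    · refine ⟨∅, ∅, Finset.disjoint_empty_left _, by simp, ?_, ?_⟩
      · intro E hE hEne
        obtain ⟨i, hi⟩ := hEne
        refine ⟨i, hi, ?_⟩
        simp only [Finset.filter_empty, Finset.sum_empty]
        have : (0:ℝ) < ∑ i ∈ E, μ i := Finset.sum_pos (fun i _ => hμ i) ⟨i, hi⟩
        positivity
      · intro F hF hFne
        exact absurd (Finset.subset_empty.mp hF) hFne.ne_empty
    -- main case
    have hmS : (0:ℝ) < ∑ i ∈ S, μ i := Finset.sum_pos (fun i _ => hμ i) hSne
    have hnU : (0:ℝ) < ∑ j ∈ U, ν j := Finset.sum_pos (fun j _ => hν j) hUne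
    have htot := hyp S subset_rfl U subset_rfl hSne hUne
    by_cases hcmp : T⁻¹ * (∑ j ∈ U, ν j) ^ β ≤ (∑ i ∈ S, μ i) ^ β
    · -- remove a row
      rw [max_eq_left hcmp] at htot
      have hrow : ∃ i0 ∈ S, ∑ j ∈ U, w (i0, j) * ν j ≤ Λ * (∑ i ∈ S, μ i) ^ (β - 1) := by
        by_contra hcon
        push_neg at hcon
        have hlt : ∑ i ∈ S, (Λ * (∑ i ∈ S, μ i) ^ (β - 1)) * μ i <
            ∑ i ∈ S, (∑ j ∈ U, w (i, j) * ν j) * μ i := by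
          apply Finset.sum_lt_sum_of_nonempty hSne
          intro i hi
          exact mul_lt_mul_of_pos_right (hcon i hi) (hμ i)
        have he1 : ∑ i ∈ S, (Λ * (∑ i ∈ S, μ i) ^ (β - 1)) * μ i
            = Λ * (∑ i ∈ S, μ i) ^ β := by
          rw [← Finset.mul_sum, mul_assoc, ← Real.rpow_add_one hmS.ne' (β - 1)]
          ring_nf
        have he2 : ∑ i ∈ S, (∑ j ∈ U, w (i, j) * ν j) * μ i
            = ∑ i ∈ S, ∑ j ∈ U, w (i, j) * μ i * ν j := by
          apply Finset.sum_congr rfl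
          intro i _
          rw [Finset.sum_mul]
          exact Finset.sum_congr rfl fun j _ => by ring
        rw [he1, he2] at hlt
        exact absurd (hlt.trans_le htot) (lt_irrefl _)
      obtain ⟨i0, hi0S, hrow0⟩ := hrow
      obtain ⟨A', B', hdisj, hunion, hrowIH, hcolIH⟩ := ih (S.erase i0) U
        (by
          have := Finset.card_erase_of_mem hi0S
          have := Finset.card_pos.mpr hSne
          omega)
        (fun E hE F hF => hyp E (hE.trans (Finset.erase_subset _ _)) F hF)
      have hB'sub : B' ⊆ (S.erase i0) ×ˢ U := hunion ▸ Finset.subset_union_right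
      refine ⟨A' ∪ {i0} ×ˢ U, B', ?_, ?_, ?_, ?_⟩
      · rw [Finset.disjoint_union_left]
        refine ⟨hdisj, ?_⟩
        rw [Finset.disjoint_left]
        intro z hz hzB
        have h1 : z.1 = i0 := (Finset.mem_product.mp hz).1 |> Finset.mem_singleton.mp
        have h2 : z.1 ∈ S.erase i0 := (Finset.mem_product.mp (hB'sub hzB)).1
        exact (Finset.mem_erase.mp h2).1 h1
      · rw [Finset.union_right_comm, hunion, ← Finset.union_product, Finset.union_comm,
          ← Finset.insert_eq, Finset.insert_erase hi0S]
      · intro E hES hEne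
        by_cases hi0E : i0 ∈ E
        · refine ⟨i0, hi0E, ?_⟩
          have hfil : U.filter (fun j => (i0, j) ∈ A' ∪ {i0} ×ˢ U) = U := by
            apply Finset.filter_true_of_mem
            intro j hj
            exact Finset.mem_union_right _ (Finset.mem_product.mpr ⟨Finset.mem_singleton_self i0, hj⟩)
          rw [hfil]
          refine hrow0.trans (mul_le_mul_of_nonneg_left ?_ hΛ)
          exact Real.rpow_le_rpow_of_nonpos (Finset.sum_pos (fun i _ => hμ i) hEne)
            (Finset.sum_le_sum_of_subset_of_nonneg hES fun i _ _ => (hμ i).le)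
            (by linarith)
        · obtain ⟨i, hiE, hle⟩ := hrowIH E (Finset.subset_erase.mpr ⟨hES, hi0E⟩) hEne
          refine ⟨i, hiE, ?_⟩
          have hfil : U.filter (fun j => (i, j) ∈ A' ∪ {i0} ×ˢ U)
              = U.filter (fun j => (i, j) ∈ A') := by
            apply Finset.filter_congr
            intro j hj
            simp only [Finset.mem_union, Finset.mem_product, Finset.mem_singleton]
            constructor
            · rintro (h | ⟨h1, _⟩)
              · exact h
              · exact absurd h1 (by rintro rfl; exact hi0E hiE)
            · exact Or.inl
          rw [hfil]
          exact hle
      · intro F hFU hFne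
        obtain ⟨j, hjF, hle⟩ := hcolIH F hFU hFne
        refine ⟨j, hjF, ?_⟩
        have hfil : S.filter (fun i => (i, j) ∈ B') = (S.erase i0).filter (fun i => (i, j) ∈ B') := by
          ext i
          simp only [Finset.mem_filter, Finset.mem_erase]
          constructor
          · rintro ⟨hiS, hiB⟩
            have : i ∈ S.erase i0 := (Finset.mem_product.mp (hB'sub hiB)).1
            exact ⟨⟨(Finset.mem_erase.mp this).1, hiS⟩, hiB⟩
          · rintro ⟨⟨_, hiS⟩, hiB⟩
            exact ⟨hiS, hiB⟩
        rw [hfil]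
        exact hle
    · -- remove a column
      have hcmp' : (∑ i ∈ S, μ i) ^ β ≤ T⁻¹ * (∑ j ∈ U, ν j) ^ β := (not_le.mp hcmp).le
      rw [max_eq_right hcmp'] at htot
      have hcol : ∃ j0 ∈ U, ∑ i ∈ S, w (i, j0) * μ i ≤
          Λ * T⁻¹ * (∑ j ∈ U, ν j) ^ (β - 1) := by
        by_contra hcon
        push_neg at hcon
        have hlt : ∑ j ∈ U, (Λ * T⁻¹ * (∑ j ∈ U, ν j) ^ (β - 1)) * ν j <
            ∑ j ∈ U, (∑ i ∈ S, w (i, j) * μ i) * ν j := by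
          apply Finset.sum_lt_sum_of_nonempty hUne
          intro j hj
          exact mul_lt_mul_of_pos_right (hcon j hj) (hν j)
        have he1 : ∑ j ∈ U, (Λ * T⁻¹ * (∑ j ∈ U, ν j) ^ (β - 1)) * ν j
            = Λ * (T⁻¹ * (∑ j ∈ U, ν j) ^ β) := by
          rw [← Finset.mul_sum, mul_assoc, mul_assoc, ← Real.rpow_add_one hnU.ne' (β - 1)]
          ring_nf
        have he2 : ∑ j ∈ U, (∑ i ∈ S, w (i, j) * μ i) * ν j
            = ∑ i ∈ S, ∑ j ∈ U, w (i, j) * μ i * ν j := by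
          rw [Finset.sum_comm]
          apply Finset.sum_congr rfl
          intro j _
          rw [Finset.sum_mul]
        rw [he1, he2] at hlt
        exact absurd (hlt.trans_le htot) (lt_irrefl _)
      obtain ⟨j0, hj0U, hcol0⟩ := hcol
      obtain ⟨A', B', hdisj, hunion, hrowIH, hcolIH⟩ := ih S (U.erase j0)
        (by
          have := Finset.card_erase_of_mem hj0U
          have := Finset.card_pos.mpr hUne
          omega)
        (fun E hE F hF => hyp E hE F (hF.trans (Finset.erase_subset _ _)))
      have hA'sub : A' ⊆ S ×ˢ (U.erase j0) := hunion ▸ Finset.subset_union_left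
      have hB'sub : B' ⊆ S ×ˢ (U.erase j0) := hunion ▸ Finset.subset_union_right
      refine ⟨A', B' ∪ S ×ˢ {j0}, ?_, ?_, ?_, ?_⟩
      · rw [Finset.disjoint_union_right]
        refine ⟨hdisj, ?_⟩
        rw [Finset.disjoint_left]
        intro z hz hzB
        have h1 : z.2 ∈ U.erase j0 := (Finset.mem_product.mp (hA'sub hz)).2
        have h2 : z.2 = j0 := (Finset.mem_product.mp hzB).2 |> Finset.mem_singleton.mp
        exact (Finset.mem_erase.mp h1).1 h2
      · rw [← Finset.union_assoc, hunion, ← Finset.product_union, Finset.union_comm,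
          ← Finset.insert_eq, Finset.insert_erase hj0U]
      · intro E hES hEne
        obtain ⟨i, hiE, hle⟩ := hrowIH E hES hEne
        refine ⟨i, hiE, ?_⟩
        have hfil : U.filter (fun j => (i, j) ∈ A') = (U.erase j0).filter (fun j => (i, j) ∈ A') := by
          ext j
          simp only [Finset.mem_filter, Finset.mem_erase]
          constructor
          · rintro ⟨hjU, hjA⟩
            have : j ∈ U.erase j0 := (Finset.mem_product.mp (hA'sub hjA)).2
            exact ⟨⟨(Finset.mem_erase.mp this).1, hjU⟩, hjA⟩
          · rintro ⟨⟨_, hjU⟩, hjA⟩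
            exact ⟨hjU, hjA⟩
        rw [hfil]
        exact hle
      · intro F hFU hFne
        by_cases hj0F : j0 ∈ F
        · refine ⟨j0, hj0F, ?_⟩
          have hfil : S.filter (fun i => (i, j0) ∈ B' ∪ S ×ˢ {j0}) = S := by
            apply Finset.filter_true_of_mem
            intro i hi
            exact Finset.mem_union_right _
              (Finset.mem_product.mpr ⟨hi, Finset.mem_singleton_self j0⟩)
          rw [hfil]
          refine hcol0.trans (mul_le_mul_of_nonneg_left ?_ (by positivity))
          exact Real.rpow_le_rpow_of_nonpos (Finset.sum_pos (fun j _ => hν j) hFne)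
            (Finset.sum_le_sum_of_subset_of_nonneg hFU fun j _ _ => (hν j).le)
            (by linarith)
        · obtain ⟨j, hjF, hle⟩ := hcolIH F (Finset.subset_erase.mpr ⟨hFU, hj0F⟩) hFne
          refine ⟨j, hjF, ?_⟩
          have hfil : S.filter (fun i => (i, j) ∈ B' ∪ S ×ˢ {j0})
              = S.filter (fun i => (i, j) ∈ B') := by
            apply Finset.filter_congr
            intro i hi
            simp only [Finset.mem_union, Finset.mem_product, Finset.mem_singleton]
            constructor
            · rintro (h | ⟨_, h2⟩)
              · exact h
              · exact absurd h2 (by rintro rfl; exact hj0F hjF)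
            · exact Or.inl
          rw [hfil]
          exact hle

lemma rpow_max {u v q : ℝ} (hu : 0 ≤ u) (hv : 0 ≤ v) (hq : 0 ≤ q) :
    (max u v) ^ q = max (u ^ q) (v ^ q) := by
  rcases le_total u v with h | h
  · rw [max_eq_right h, max_eq_right (Real.rpow_le_rpow hu h hq)]
  · rw [max_eq_left h, max_eq_left (Real.rpow_le_rpow hv h hq)]

lemma main_partition (μ : Fin m → ℝ) (ν : Fin n → ℝ) (hμ : ∀ i, 0 < μ i) (hν : ∀ j, 0 < ν j)
    {t : ℝ} (ht : 0 < t) {p q α : ℝ} (hq : 1 ≤ q) (hqp : q < p) (hα : α = 1 / q - 1 / p)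
    (a : Fin m × Fin n → ℝ) {Λ : ℝ} (hΛ : 0 < Λ)
    (hyp : ∀ (E : Finset (Fin m)) (F : Finset (Fin n)), E.Nonempty → F.Nonempty →
      (∑ i ∈ E, ∑ j ∈ F, |a (i, j)| ^ q * μ i * ν j) ^ (1 / q) ≤
        Λ * max ((∑ i ∈ E, μ i) ^ α) (t⁻¹ * (∑ j ∈ F, ν j) ^ α)) :
    ∃ A B : Finset (Fin m × Fin n), Disjoint A B ∧ A ∪ B = Finset.univ ∧
      mixedNorm m n μ ν p q (fun z => if z ∈ A then a z else 0) ≤ Λ ∧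
      mixedNorm n m ν μ p q (fun z => if (z.2, z.1) ∈ B then a (z.2, z.1) else 0) ≤ Λ / t := by
  have hq0 : (0:ℝ) < q := lt_of_lt_of_le one_pos hq
  have hp : (0:ℝ) < p := hq0.trans hqp
  set β : ℝ := 1 - q / p with hβdef
  have hβ1 : β ≤ 1 := by
    have : 0 < q / p := div_pos hq0 hp
    rw [hβdef]; linarith
  have hβ0 : 0 < β := by
    have : q / p < 1 := (div_lt_one hp).mpr hqp
    rw [hβdef]; linarith
  have hαq : α * q = β := by
    rw [hα, hβdef]
    field_simp
  have hT : (0:ℝ) < t ^ q := Real.rpow_pos_of_pos ht q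
  have hw0 : ∀ z : Fin m × Fin n, (0:ℝ) ≤ |a z| ^ q := fun z =>
    Real.rpow_nonneg (abs_nonneg _) _
  have hyp' : ∀ E ⊆ (Finset.univ : Finset (Fin m)), ∀ F ⊆ (Finset.univ : Finset (Fin n)),
      E.Nonempty → F.Nonempty →
      ∑ i ∈ E, ∑ j ∈ F, |a (i, j)| ^ q * μ i * ν j ≤
        Λ ^ q * max ((∑ i ∈ E, μ i) ^ β) ((t ^ q)⁻¹ * (∑ j ∈ F, ν j) ^ β) := by
    intro E _ F _ hEne hFne
    have hE0 : (0:ℝ) ≤ ∑ i ∈ E, μ i := Finset.sum_nonneg fun i _ => (hμ i).le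
    have hF0 : (0:ℝ) ≤ ∑ j ∈ F, ν j := Finset.sum_nonneg fun j _ => (hν j).le
    have h0 : (0:ℝ) ≤ ∑ i ∈ E, ∑ j ∈ F, |a (i, j)| ^ q * μ i * ν j :=
      Finset.sum_nonneg fun i _ => Finset.sum_nonneg fun j _ =>
        mul_nonneg (mul_nonneg (hw0 (i, j)) (hμ i).le) (hν j).le
    have hmax0 : (0:ℝ) ≤ max ((∑ i ∈ E, μ i) ^ α) (t⁻¹ * (∑ j ∈ F, ν j) ^ α) :=
      le_trans (Real.rpow_nonneg hE0 α) (le_max_left _ _)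
    calc ∑ i ∈ E, ∑ j ∈ F, |a (i, j)| ^ q * μ i * ν j
        = ((∑ i ∈ E, ∑ j ∈ F, |a (i, j)| ^ q * μ i * ν j) ^ (1/q)) ^ q := by
          rw [← Real.rpow_mul h0, one_div, inv_mul_cancel₀ hq0.ne', Real.rpow_one]
      _ ≤ (Λ * max ((∑ i ∈ E, μ i) ^ α) (t⁻¹ * (∑ j ∈ F, ν j) ^ α)) ^ q :=
          Real.rpow_le_rpow (Real.rpow_nonneg h0 _) (hyp E F hEne hFne) hq0.le
      _ = Λ ^ q * max ((∑ i ∈ E, μ i) ^ β) ((t ^ q)⁻¹ * (∑ j ∈ F, ν j) ^ β) := by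
          rw [Real.mul_rpow hΛ.le hmax0,
            rpow_max (Real.rpow_nonneg hE0 α)
              (mul_nonneg (inv_nonneg.mpr ht.le) (Real.rpow_nonneg hF0 α)) hq0.le,
            ← Real.rpow_mul hE0, hαq,
            Real.mul_rpow (inv_nonneg.mpr ht.le) (Real.rpow_nonneg hF0 α),
            Real.inv_rpow ht.le, ← Real.rpow_mul hF0, hαq]
  obtain ⟨A, B, hd, hu, hrow, hcol⟩ := part_aux μ ν hμ hν (fun z => |a z| ^ q) hw0
    (t ^ q) (Λ ^ q) β hT (Real.rpow_nonneg hΛ.le q) hβ1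
    ((Finset.univ : Finset (Fin m)).card + (Finset.univ : Finset (Fin n)).card)
    Finset.univ Finset.univ le_rfl hyp'
  refine ⟨A, B, hd, by rw [← Finset.univ_product_univ, hu], ?_, ?_⟩
  · apply weakLpNorm_le
    intro s hs
    rcases (Finset.univ.filter fun i : Fin m =>
        s < |(∑ j, |if (i, j) ∈ A then a (i, j) else 0| ^ q * ν j) ^ (1 / q)|).eq_empty_or_nonempty
      with he | hne
    · rw [he, Finset.sum_empty, Real.zero_rpow (one_div_ne_zero hp.ne'), mul_zero]
      exact hΛ.le
    · set Es := Finset.univ.filter fun i : Fin m =>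
        s < |(∑ j, |if (i, j) ∈ A then a (i, j) else 0| ^ q * ν j) ^ (1 / q)| with hEs
      obtain ⟨i, hiE, hle⟩ := hrow Es (Finset.subset_univ _) hne
      have hX0 : (0:ℝ) ≤ ∑ j, |if (i, j) ∈ A then a (i, j) else 0| ^ q * ν j :=
        Finset.sum_nonneg fun j _ => mul_nonneg (Real.rpow_nonneg (abs_nonneg _) _) (hν j).le
      have hrid : ∑ j ∈ Finset.univ.filter (fun j => (i, j) ∈ A), |a (i, j)| ^ q * ν j
          = ∑ j, |if (i, j) ∈ A then a (i, j) else 0| ^ q * ν j := by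
        rw [Finset.sum_filter]
        apply Finset.sum_congr rfl
        intro j _
        by_cases hA : (i, j) ∈ A
        · simp [hA]
        · simp [hA, Real.zero_rpow hq0.ne']
      have hsgi : s < (∑ j, |if (i, j) ∈ A then a (i, j) else 0| ^ q * ν j) ^ (1 / q) := by
        have := (Finset.mem_filter.mp hiE).2
        rwa [abs_of_nonneg (Real.rpow_nonneg hX0 _)] at this
      have hs2 : s ^ q < ∑ j, |if (i, j) ∈ A then a (i, j) else 0| ^ q * ν j := by
        calc s ^ q < ((∑ j, |if (i, j) ∈ A then a (i, j) else 0| ^ q * ν j) ^ (1/q)) ^ q :=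
              Real.rpow_lt_rpow hs.le hsgi hq0
          _ = ∑ j, |if (i, j) ∈ A then a (i, j) else 0| ^ q * ν j := by
              rw [← Real.rpow_mul hX0, one_div, inv_mul_cancel₀ hq0.ne', Real.rpow_one]
      have hEsm : (0:ℝ) < ∑ i' ∈ Es, μ i' := Finset.sum_pos (fun i' _ => hμ i') hne
      have hchain : s ^ q < Λ ^ q * ((∑ i' ∈ Es, μ i') ^ (q/p))⁻¹ := by
        have hrw : (∑ i' ∈ Es, μ i') ^ (β - 1) = ((∑ i' ∈ Es, μ i') ^ (q/p))⁻¹ := by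
          rw [show β - 1 = -(q/p) by rw [hβdef]; ring, Real.rpow_neg hEsm.le]
        rw [← hrw]
        calc s ^ q < ∑ j, |if (i, j) ∈ A then a (i, j) else 0| ^ q * ν j := hs2
          _ = ∑ j ∈ Finset.univ.filter (fun j => (i, j) ∈ A), |a (i, j)| ^ q * ν j := hrid.symm
          _ ≤ Λ ^ q * (∑ i' ∈ Es, μ i') ^ (β - 1) := hle
      have h4 : (s * (∑ i' ∈ Es, μ i') ^ (1/p)) ^ q < Λ ^ q := by
        rw [Real.mul_rpow hs.le (Real.rpow_nonneg hEsm.le _), ← Real.rpow_mul hEsm.le,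
          show (1/p) * q = q/p by ring]
        calc s ^ q * (∑ i' ∈ Es, μ i') ^ (q/p)
            < (Λ ^ q * ((∑ i' ∈ Es, μ i') ^ (q/p))⁻¹) * (∑ i' ∈ Es, μ i') ^ (q/p) :=
              mul_lt_mul_of_pos_right hchain (Real.rpow_pos_of_pos hEsm _)
          _ = Λ ^ q := by
              field_simp
      exact le_of_lt ((Real.rpow_lt_rpow_iff
        (mul_nonneg hs.le (Real.rpow_nonneg hEsm.le _)) hΛ.le hq0).mp h4)
  · apply weakLpNorm_le
    intro s hs
    rcases (Finset.univ.filter fun j : Fin n =>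
        s < |(∑ i, |if (i, j) ∈ B then a (i, j) else 0| ^ q * μ i) ^ (1 / q)|).eq_empty_or_nonempty
      with he | hne
    · rw [he, Finset.sum_empty, Real.zero_rpow (one_div_ne_zero hp.ne'), mul_zero]
      positivity
    · set Fs := Finset.univ.filter fun j : Fin n =>
        s < |(∑ i, |if (i, j) ∈ B then a (i, j) else 0| ^ q * μ i) ^ (1 / q)| with hFs
      obtain ⟨j, hjF, hle⟩ := hcol Fs (Finset.subset_univ _) hne
      have hX0 : (0:ℝ) ≤ ∑ i, |if (i, j) ∈ B then a (i, j) else 0| ^ q * μ i :=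
        Finset.sum_nonneg fun i _ => mul_nonneg (Real.rpow_nonneg (abs_nonneg _) _) (hμ i).le
      have hrid : ∑ i ∈ Finset.univ.filter (fun i => (i, j) ∈ B), |a (i, j)| ^ q * μ i
          = ∑ i, |if (i, j) ∈ B then a (i, j) else 0| ^ q * μ i := by
        rw [Finset.sum_filter]
        apply Finset.sum_congr rfl
        intro i _
        by_cases hB : (i, j) ∈ B
        · simp [hB]
        · simp [hB, Real.zero_rpow hq0.ne']
      have hsgi : s < (∑ i, |if (i, j) ∈ B then a (i, j) else 0| ^ q * μ i) ^ (1 / q) := by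
        have := (Finset.mem_filter.mp hjF).2
        rwa [abs_of_nonneg (Real.rpow_nonneg hX0 _)] at this
      have hs2 : s ^ q < ∑ i, |if (i, j) ∈ B then a (i, j) else 0| ^ q * μ i := by
        calc s ^ q < ((∑ i, |if (i, j) ∈ B then a (i, j) else 0| ^ q * μ i) ^ (1/q)) ^ q :=
              Real.rpow_lt_rpow hs.le hsgi hq0
          _ = ∑ i, |if (i, j) ∈ B then a (i, j) else 0| ^ q * μ i := by
              rw [← Real.rpow_mul hX0, one_div, inv_mul_cancel₀ hq0.ne', Real.rpow_one]
      have hFsν : (0:ℝ) < ∑ j' ∈ Fs, ν j' := Finset.sum_pos (fun j' _ => hν j') hne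
      have hchain : s ^ q < (Λ / t) ^ q * ((∑ j' ∈ Fs, ν j') ^ (q/p))⁻¹ := by
        have hrw : (∑ j' ∈ Fs, ν j') ^ (β - 1) = ((∑ j' ∈ Fs, ν j') ^ (q/p))⁻¹ := by
          rw [show β - 1 = -(q/p) by rw [hβdef]; ring, Real.rpow_neg hFsν.le]
        have hdiv : (Λ / t) ^ q = Λ ^ q * (t ^ q)⁻¹ := by
          rw [Real.div_rpow hΛ.le ht.le, div_eq_mul_inv]
        rw [hdiv, ← hrw, mul_assoc]
        calc s ^ q < ∑ i, |if (i, j) ∈ B then a (i, j) else 0| ^ q * μ i := hs2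
          _ = ∑ i ∈ Finset.univ.filter (fun i => (i, j) ∈ B), |a (i, j)| ^ q * μ i := hrid.symm
          _ ≤ Λ ^ q * (t ^ q)⁻¹ * (∑ j' ∈ Fs, ν j') ^ (β - 1) := hle
          _ = Λ ^ q * ((t ^ q)⁻¹ * (∑ j' ∈ Fs, ν j') ^ (β - 1)) := by ring
      have h4 : (s * (∑ j' ∈ Fs, ν j') ^ (1/p)) ^ q < (Λ / t) ^ q := by
        rw [Real.mul_rpow hs.le (Real.rpow_nonneg hFsν.le _), ← Real.rpow_mul hFsν.le,
          show (1/p) * q = q/p by ring]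
        calc s ^ q * (∑ j' ∈ Fs, ν j') ^ (q/p)
            < ((Λ / t) ^ q * ((∑ j' ∈ Fs, ν j') ^ (q/p))⁻¹) * (∑ j' ∈ Fs, ν j') ^ (q/p) :=
              mul_lt_mul_of_pos_right hchain (Real.rpow_pos_of_pos hFsν _)
          _ = (Λ / t) ^ q := by
              field_simp
      exact le_of_lt ((Real.rpow_lt_rpow_iff
        (mul_nonneg hs.le (Real.rpow_nonneg hFsν.le _)) (by positivity) hq0).mp h4)

lemma le_tripleNormPQ (μ : Fin m → ℝ) (ν : Fin n → ℝ) (q α t : ℝ) (a : Fin m × Fin n → ℝ)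
    (E : Finset (Fin m)) (F : Finset (Fin n)) (hE : E.Nonempty) (hF : F.Nonempty) :
    (max ((∑ i ∈ E, μ i) ^ α) (t⁻¹ * (∑ j ∈ F, ν j) ^ α))⁻¹ *
      (∑ i ∈ E, ∑ j ∈ F, |a (i, j)| ^ q * μ i * ν j) ^ (1 / q) ≤
      tripleNormPQ m n μ ν q α t a := by
  apply le_csSup
  · apply Set.Finite.bddAbove
    apply Set.Finite.subset (Set.finite_range
      (fun EF : Finset (Fin m) × Finset (Fin n) =>
        (max ((∑ i ∈ EF.1, μ i) ^ α) (t⁻¹ * (∑ j ∈ EF.2, ν j) ^ α))⁻¹ *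
          (∑ i ∈ EF.1, ∑ j ∈ EF.2, |a (i, j)| ^ q * μ i * ν j) ^ (1 / q)))
    rintro x ⟨E', F', _, _, rfl⟩
    exact ⟨(E', F'), rfl⟩
  · exact ⟨E, F, hE, hF, rfl⟩

/-- Theorem 2.5: `C(p,q) |||a|||_{p,q,t} ≤ K_{p,q,t}(a) ≤ 2 |||a|||_{p,q,t}`
with `C(p,q) = (1 - q/p)^{1/q}`, and moreover if `|||a|||_{p,q,t} ≤ 1` there is a
partition `M × N = A ∪ B` with `‖1_A·a‖_{ℓ^{p,∞}_m(ℓ^q_n)} ≤ 1` and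
`‖(1_B·a)ᵀ‖_{ℓ^{p,∞}_n(ℓ^q_m)} ≤ 1/t`. -/
theorem KtPQ_equiv_tripleNormPQ (m n : ℕ) (μ : Fin m → ℝ) (ν : Fin n → ℝ)
    (hμ : ∀ i, 0 < μ i) (hν : ∀ j, 0 < ν j) (t : ℝ) (ht : 0 < t)
    (p q α : ℝ) (hq : 1 ≤ q) (hqp : q < p) (hα : α = 1 / q - 1 / p)
    (a : Fin m × Fin n → ℝ) :
    ((1 - q / p) ^ (1 / q) * tripleNormPQ m n μ ν q α t a ≤ KtPQ m n μ ν p q t a ∧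
      KtPQ m n μ ν p q t a ≤ 2 * tripleNormPQ m n μ ν q α t a) ∧
    (tripleNormPQ m n μ ν q α t a ≤ 1 →
      ∃ A B : Finset (Fin m × Fin n), Disjoint A B ∧ A ∪ B = Finset.univ ∧
        mixedNorm m n μ ν p q (fun z => if z ∈ A then a z else 0) ≤ 1 ∧
        mixedNorm n m ν μ p q (fun z => if (z.2, z.1) ∈ B then a (z.2, z.1) else 0) ≤ 1 / t) := by
  have hq0 : (0:ℝ) < q := lt_of_lt_of_le one_pos hq
  have hp : (0:ℝ) < p := hq0.trans hqp
  have hγ : (0:ℝ) < 1 - q / p := by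
    have : q / p < 1 := (div_lt_one hp).mpr hqp
    linarith
  set γ : ℝ := 1 - q / p with hγdef
  set C : ℝ := γ ^ (1 / q) with hCdef
  have hC : 0 < C := Real.rpow_pos_of_pos hγ _
  set X : ℝ := tripleNormPQ m n μ ν q α t a with hXdef
  -- basic facts
  have hX0 : 0 ≤ X := by
    rw [hXdef, tripleNormPQ]
    apply Real.sSup_nonneg
    rintro x ⟨E, F, hE, hF, rfl⟩
    have h1 : (0:ℝ) ≤ (max ((∑ i ∈ E, μ i) ^ α) (t⁻¹ * (∑ j ∈ F, ν j) ^ α))⁻¹ :=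
      inv_nonneg.mpr (le_trans (Real.rpow_nonneg
        (Finset.sum_nonneg fun i _ => (hμ i).le) α) (le_max_left _ _))
    exact mul_nonneg h1 (Real.rpow_nonneg (Finset.sum_nonneg fun i _ =>
      Finset.sum_nonneg fun j _ => mul_nonneg (mul_nonneg
        (Real.rpow_nonneg (abs_nonneg _) _) (hμ i).le) (hν j).le) _)
  have hmSpos : ∀ E : Finset (Fin m), E.Nonempty → (0:ℝ) < ∑ i ∈ E, μ i :=
    fun E hE => Finset.sum_pos (fun i _ => hμ i) hE
  have hnFpos : ∀ F : Finset (Fin n), F.Nonempty → (0:ℝ) < ∑ j ∈ F, ν j :=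
    fun F hF => Finset.sum_pos (fun j _ => hν j) hF
  have hmxpos : ∀ (E : Finset (Fin m)) (F : Finset (Fin n)), E.Nonempty →
      (0:ℝ) < max ((∑ i ∈ E, μ i) ^ α) (t⁻¹ * (∑ j ∈ F, ν j) ^ α) :=
    fun E F hE => lt_of_lt_of_le (Real.rpow_pos_of_pos (hmSpos E hE) α) (le_max_left _ _)
  -- extraction of block estimates from X ≤ Λ
  have hextract : ∀ Λ : ℝ, X ≤ Λ → ∀ (E : Finset (Fin m)) (F : Finset (Fin n)),
      E.Nonempty → F.Nonempty →
      (∑ i ∈ E, ∑ j ∈ F, |a (i, j)| ^ q * μ i * ν j) ^ (1 / q) ≤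
        Λ * max ((∑ i ∈ E, μ i) ^ α) (t⁻¹ * (∑ j ∈ F, ν j) ^ α) := by
    intro Λ hXΛ E F hE hF
    have hx := le_trans (le_tripleNormPQ μ ν q α t a E F hE hF) hXΛ
    have hmx := hmxpos E F hE
    set mx := max ((∑ i ∈ E, μ i) ^ α) (t⁻¹ * (∑ j ∈ F, ν j) ^ α)
    calc (∑ i ∈ E, ∑ j ∈ F, |a (i, j)| ^ q * μ i * ν j) ^ (1 / q)
        = mx * (mx⁻¹ * (∑ i ∈ E, ∑ j ∈ F, |a (i, j)| ^ q * μ i * ν j) ^ (1 / q)) := by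
          field_simp
      _ ≤ mx * Λ := mul_le_mul_of_nonneg_left hx hmx.le
      _ = Λ * mx := mul_comm _ _
  -- nonnegativity of KtPQ set elements
  have hKelt : ∀ x ∈ {x : ℝ | ∃ b c : Fin m × Fin n → ℝ, a = b + c ∧
      x = mixedNorm m n μ ν p q b + t * mixedNorm n m ν μ p q (fun z => c (z.2, z.1))},
      (0:ℝ) ≤ x := by
    rintro x ⟨b, c, _, rfl⟩
    exact add_nonneg (mixedNorm_nonneg μ ν (fun i => (hμ i).le) q hp b)
      (mul_nonneg ht.le (mixedNorm_nonneg ν μ (fun j => (hν j).le) q hp _))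
  have hKbdd : BddBelow {x : ℝ | ∃ b c : Fin m × Fin n → ℝ, a = b + c ∧
      x = mixedNorm m n μ ν p q b + t * mixedNorm n m ν μ p q (fun z => c (z.2, z.1))} :=
    ⟨0, hKelt⟩
  have hKne : Set.Nonempty {x : ℝ | ∃ b c : Fin m × Fin n → ℝ, a = b + c ∧
      x = mixedNorm m n μ ν p q b + t * mixedNorm n m ν μ p q (fun z => c (z.2, z.1))} :=
    ⟨_, a, 0, (add_zero a).symm, rfl⟩
  -- LOWER BOUND
  have hlower : C * X ≤ KtPQ m n μ ν p q t a := by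
    rw [KtPQ]
    apply le_csInf hKne
    rintro k ⟨b, c, hbc, rfl⟩
    set Wb := mixedNorm m n μ ν p q b with hWbdef
    set Wc := mixedNorm n m ν μ p q (fun z => c (z.2, z.1)) with hWcdef
    have hWb0 : 0 ≤ Wb := mixedNorm_nonneg μ ν (fun i => (hμ i).le) q hp b
    have hWc0 : 0 ≤ Wc := mixedNorm_nonneg ν μ (fun j => (hν j).le) q hp _
    have hk0 : 0 ≤ Wb + t * Wc := add_nonneg hWb0 (mul_nonneg ht.le hWc0)
    suffices hXle : X ≤ (Wb + t * Wc) / C by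
      calc C * X ≤ C * ((Wb + t * Wc) / C) := mul_le_mul_of_nonneg_left hXle hC.le
        _ = Wb + t * Wc := by field_simp
    rw [hXdef, tripleNormPQ]
    apply Real.sSup_le _ (div_nonneg hk0 hC.le)
    rintro x ⟨E, F, hEne, hFne, rfl⟩
    have hmE := hmSpos E hEne
    have hnF := hnFpos F hFne
    have hmx := hmxpos E F hEne
    set mx := max ((∑ i ∈ E, μ i) ^ α) (t⁻¹ * (∑ j ∈ F, ν j) ^ α) with hmxdef
    -- abbreviations
    set Sa := ∑ i ∈ E, ∑ j ∈ F, |a (i, j)| ^ q * μ i * ν j with hSadef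
    set Sb := ∑ i ∈ E, ∑ j ∈ F, |b (i, j)| ^ q * μ i * ν j with hSbdef
    set Sc := ∑ i ∈ E, ∑ j ∈ F, |c (i, j)| ^ q * μ i * ν j with hScdef
    have hsum0 : ∀ d : Fin m × Fin n → ℝ,
        (0:ℝ) ≤ ∑ i ∈ E, ∑ j ∈ F, |d (i, j)| ^ q * μ i * ν j :=
      fun d => Finset.sum_nonneg fun i _ => Finset.sum_nonneg fun j _ =>
        mul_nonneg (mul_nonneg (Real.rpow_nonneg (abs_nonneg _) _) (hμ i).le) (hν j).le
    -- Minkowski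
    have hconv : ∀ d : Fin m × Fin n → ℝ,
        ∑ i ∈ E, ∑ j ∈ F, |d (i, j)| ^ q * μ i * ν j
          = ∑ z ∈ E ×ˢ F, (|d z| * (μ z.1 * ν z.2) ^ (1 / q)) ^ q := by
      intro d
      rw [Finset.sum_product]
      refine Finset.sum_congr rfl fun i _ => Finset.sum_congr rfl fun j _ => ?_
      have hW0 : (0:ℝ) ≤ μ i * ν j := mul_nonneg (hμ i).le (hν j).le
      rw [Real.mul_rpow (abs_nonneg _) (Real.rpow_nonneg hW0 _),
        ← Real.rpow_mul hW0, one_div, inv_mul_cancel₀ hq0.ne', Real.rpow_one]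
      ring
    have hmink : Sa ^ (1 / q) ≤ Sb ^ (1 / q) + Sc ^ (1 / q) := by
      have h1 : Sa ≤ ∑ z ∈ E ×ˢ F,
          ((|b z| * (μ z.1 * ν z.2) ^ (1 / q)) + (|c z| * (μ z.1 * ν z.2) ^ (1 / q))) ^ q := by
        rw [hSadef, hconv a]
        apply Finset.sum_le_sum
        intro z _
        apply Real.rpow_le_rpow (mul_nonneg (abs_nonneg _)
          (Real.rpow_nonneg (mul_nonneg (hμ z.1).le (hν z.2).le) _)) _ hq0.le
        rw [← add_mul]
        apply mul_le_mul_of_nonneg_right _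
          (Real.rpow_nonneg (mul_nonneg (hμ z.1).le (hν z.2).le) _)
        rw [hbc]
        exact abs_add_le _ _
      calc Sa ^ (1 / q) ≤ (∑ z ∈ E ×ˢ F,
            ((|b z| * (μ z.1 * ν z.2) ^ (1 / q)) + (|c z| * (μ z.1 * ν z.2) ^ (1 / q))) ^ q)
              ^ (1 / q) :=
            Real.rpow_le_rpow (hsum0 a) h1 (by positivity)
        _ ≤ (∑ z ∈ E ×ˢ F, (|b z| * (μ z.1 * ν z.2) ^ (1 / q)) ^ q) ^ (1 / q)
            + (∑ z ∈ E ×ˢ F, (|c z| * (μ z.1 * ν z.2) ^ (1 / q)) ^ q) ^ (1 / q) :=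
            Real.Lp_add_le_of_nonneg (s := E ×ˢ F)
              (f := fun z => |b z| * (μ z.1 * ν z.2) ^ (1 / q))
              (g := fun z => |c z| * (μ z.1 * ν z.2) ^ (1 / q)) hq
              (fun z _ => mul_nonneg (abs_nonneg _)
                (Real.rpow_nonneg (mul_nonneg (hμ z.1).le (hν z.2).le) _))
              (fun z _ => mul_nonneg (abs_nonneg _)
                (Real.rpow_nonneg (mul_nonneg (hμ z.1).le (hν z.2).le) _))
        _ = Sb ^ (1 / q) + Sc ^ (1 / q) := by rw [hSbdef, hScdef, hconv b, hconv c]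
    -- block estimates
    have hαγ : γ * (1 / q) = α := by
      rw [hα, hγdef]
      field_simp
    have hrpow_block : ∀ (W Y S : ℝ), 0 ≤ W → 0 < Y → 0 ≤ S →
        γ * S ≤ W ^ q * Y ^ γ → S ^ (1 / q) ≤ W * Y ^ α / C := by
      intro W Y S hW hY hS h
      have h2 : S ≤ W ^ q * Y ^ γ / γ := (le_div_iff₀' hγ).mpr h
      calc S ^ (1 / q) ≤ (W ^ q * Y ^ γ / γ) ^ (1 / q) :=
            Real.rpow_le_rpow hS h2 (by positivity)
        _ = W * Y ^ α / C := by
            rw [Real.div_rpow (mul_nonneg (Real.rpow_nonneg hW _)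
                (Real.rpow_nonneg hY.le _)) hγ.le,
              Real.mul_rpow (Real.rpow_nonneg hW _) (Real.rpow_nonneg hY.le _),
              ← Real.rpow_mul hW, ← Real.rpow_mul hY.le, hαγ,
              mul_one_div, div_self hq0.ne', Real.rpow_one, hCdef]
    have hSb : Sb ^ (1 / q) ≤ Wb * (∑ i ∈ E, μ i) ^ α / C := by
      apply hrpow_block _ _ _ hWb0 hmE (hsum0 b)
      exact block_le μ ν hμ (fun j => (hν j).le) hq0 hqp b E F
    have hSc : Sc ^ (1 / q) ≤ Wc * (∑ j ∈ F, ν j) ^ α / C := by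
      apply hrpow_block _ _ _ hWc0 hnF (hsum0 c)
      have hbl := block_le ν μ hν (fun i => (hμ i).le) hq0 hqp
        (fun z => c (z.2, z.1)) F E
      have hcomm : ∑ i ∈ E, ∑ j ∈ F, |c (i, j)| ^ q * μ i * ν j
          = ∑ j ∈ F, ∑ i ∈ E, |c (i, j)| ^ q * ν j * μ i := by
        rw [Finset.sum_comm]
        exact Finset.sum_congr rfl fun j _ => Finset.sum_congr rfl fun i _ => by ring
      rw [hcomm]
      exact hbl
    -- combine
    have hmEα : (∑ i ∈ E, μ i) ^ α ≤ mx := le_max_left _ _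
    have hnFα : (∑ j ∈ F, ν j) ^ α ≤ t * mx := by
      have h1 : t⁻¹ * (∑ j ∈ F, ν j) ^ α ≤ mx := le_max_right _ _
      calc (∑ j ∈ F, ν j) ^ α = t * (t⁻¹ * (∑ j ∈ F, ν j) ^ α) := by field_simp
        _ ≤ t * mx := mul_le_mul_of_nonneg_left h1 ht.le
    have hSaB : Sa ^ (1 / q) ≤ (Wb * mx + Wc * (t * mx)) / C := by
      calc Sa ^ (1 / q) ≤ Sb ^ (1 / q) + Sc ^ (1 / q) := hmink
        _ ≤ Wb * (∑ i ∈ E, μ i) ^ α / C + Wc * (∑ j ∈ F, ν j) ^ α / C :=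
            add_le_add hSb hSc
        _ ≤ Wb * mx / C + Wc * (t * mx) / C :=
            add_le_add ((div_le_div_iff_of_pos_right hC).mpr (mul_le_mul_of_nonneg_left hmEα hWb0))
              ((div_le_div_iff_of_pos_right hC).mpr (mul_le_mul_of_nonneg_left hnFα hWc0))
        _ = (Wb * mx + Wc * (t * mx)) / C := by ring
    calc mx⁻¹ * Sa ^ (1 / q) ≤ mx⁻¹ * ((Wb * mx + Wc * (t * mx)) / C) :=
          mul_le_mul_of_nonneg_left hSaB (inv_nonneg.mpr hmx.le)
      _ = (Wb + t * Wc) / C := by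
          field_simp
  -- UPPER BOUND
  have hupper : KtPQ m n μ ν p q t a ≤ 2 * X := by
    by_cases hXpos : 0 < X
    · obtain ⟨A, B, hd, hu, h1, h2⟩ := main_partition μ ν hμ hν ht hq hqp hα a hXpos
        (hextract X le_rfl)
      set b : Fin m × Fin n → ℝ := fun z => if z ∈ A then a z else 0 with hbdef
      set c : Fin m × Fin n → ℝ := fun z => if z ∈ B then a z else 0 with hcdef
      have hdec : a = b + c := by
        funext z
        rw [Pi.add_apply, hbdef, hcdef]
        by_cases hzA : z ∈ A
        · have hzB : z ∉ B := Finset.disjoint_left.mp hd hzA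
          simp [hzA, hzB]
        · have hzB : z ∈ B := by
            have : z ∈ A ∪ B := hu ▸ Finset.mem_univ z
            rcases Finset.mem_union.mp this with h | h
            · exact absurd h hzA
            · exact h
          simp [hzA, hzB]
      have hKle : KtPQ m n μ ν p q t a ≤
          mixedNorm m n μ ν p q b + t * mixedNorm n m ν μ p q (fun z => c (z.2, z.1)) := by
        rw [KtPQ]
        exact csInf_le hKbdd ⟨b, c, hdec, rfl⟩
      calc KtPQ m n μ ν p q t a
          ≤ mixedNorm m n μ ν p q b + t * mixedNorm n m ν μ p q (fun z => c (z.2, z.1)) := hKle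
        _ ≤ X + t * (X / t) := add_le_add h1 (mul_le_mul_of_nonneg_left h2 ht.le)
        _ = 2 * X := by rw [show t * (X / t) = X by field_simp]; ring
    · have hX : X = 0 := le_antisymm (not_lt.mp hXpos) hX0
      have haz : ∀ z : Fin m × Fin n, a z = 0 := by
        rintro ⟨i, j⟩
        by_contra hne
        have habs : 0 < |a (i, j)| := abs_pos.mpr hne
        have hS : (0:ℝ) < ∑ i' ∈ {i}, ∑ j' ∈ {j}, |a (i', j')| ^ q * μ i' * ν j' := by
          rw [Finset.sum_singleton, Finset.sum_singleton]
          exact mul_pos (mul_pos (Real.rpow_pos_of_pos habs q) (hμ i)) (hν j)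
        have hmx := hmxpos {i} {j} (Finset.singleton_nonempty i)
        have hpos : (0:ℝ) < (max ((∑ i' ∈ {i}, μ i') ^ α) (t⁻¹ * (∑ j' ∈ {j}, ν j') ^ α))⁻¹ *
            (∑ i' ∈ {i}, ∑ j' ∈ {j}, |a (i', j')| ^ q * μ i' * ν j') ^ (1 / q) :=
          mul_pos (inv_pos.mpr hmx) (Real.rpow_pos_of_pos hS _)
        have hle := le_tripleNormPQ μ ν q α t a {i} {j}
          (Finset.singleton_nonempty i) (Finset.singleton_nonempty j)
        rw [← hXdef, hX] at hle
        exact absurd (hpos.trans_le hle) (lt_irrefl _)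
      have hKle : KtPQ m n μ ν p q t a ≤
          mixedNorm m n μ ν p q a + t * mixedNorm n m ν μ p q
            (fun z => (0 : Fin m × Fin n → ℝ) (z.2, z.1)) := by
        rw [KtPQ]
        exact csInf_le hKbdd ⟨a, 0, (add_zero a).symm, rfl⟩
      have hma : mixedNorm m n μ ν p q a = 0 :=
        mixedNorm_zero μ ν (fun i => (hμ i).le) hp hq0 a haz
      have hmc : mixedNorm n m ν μ p q (fun z => (0 : Fin m × Fin n → ℝ) (z.2, z.1)) = 0 :=
        mixedNorm_zero ν μ (fun j => (hν j).le) hp hq0 _ (fun z => rfl)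
      rw [hma, hmc, mul_zero, add_zero] at hKle
      rw [hX, mul_zero]
      exact hKle
  refine ⟨⟨hlower, hupper⟩, ?_⟩
  intro hXle1
  obtain ⟨A, B, hd, hu, h1, h2⟩ := main_partition μ ν hμ hν ht hq hqp hα a one_pos
    (hextract 1 hXle1)
  exact ⟨A, B, hd, hu, h1, h2⟩
end

section
/- Let m ∈ ℕ, let M = N = Fin m each with all weights equal to 1, and let t ≥ 1. For any matrix a : M × N → ℝ with ⦀a⦀_t ≤ 1, where ⦀a⦀_t = sup { |E|⁻¹ ∑_{(i,j)∈E×F} |a(i,j)| : E ⊆ M, F ⊆ N nonempty, t⁻¹|F| ≤ |E| }, there is a partition M × N = A ∪ B, A ∩ B = ∅, such that max_i ∑_{j:(i,j)∈A} |a(i,j)| ≤ 1 and max_j ∑_{i:(i,j)∈B} |a(i,j)| ≤ 1/⌊t⌋. Consequently K_t(a) ≤ (1 + t/⌊t⌋) ⦀a⦀_t < 3 ⦀a⦀_t, where K_t is the K_t-functional of the couple (ℓ^∞_m(ℓ^1_m), ℓ^∞_m(ℓ^1_m)^⊤). -/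
open Finset

/-- The Varopoulos norm `⦀a⦀_t` on `Fin m × Fin m` with counting measure:
supremum over nonempty `E, F` with `t⁻¹|F| ≤ |E|` of `|E|⁻¹ ∑_{E×F} |a|`. -/
noncomputable def varNorm (m : ℕ) (t : ℝ) (a : Fin m × Fin m → ℝ) : ℝ :=
  sSup {x : ℝ | ∃ E F : Finset (Fin m), E.Nonempty ∧ F.Nonempty ∧
    t⁻¹ * (F.card : ℝ) ≤ (E.card : ℝ) ∧
    x = ((E.card : ℝ))⁻¹ * ∑ i ∈ E, ∑ j ∈ F, |a (i, j)|}

/-- The `K_t`-functional of the couple `(ℓ^∞_m(ℓ^1_m), ℓ^∞_m(ℓ^1_m)ᵀ)`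
with counting measure. -/
noncomputable def KtCount (m : ℕ) (t : ℝ) (a : Fin m × Fin m → ℝ) : ℝ :=
  sInf {x : ℝ | ∃ b c : Fin m × Fin m → ℝ, a = b + c ∧
    x = (⨆ i : Fin m, ∑ j : Fin m, |b (i, j)|) +
      t * ⨆ j : Fin m, ∑ i : Fin m, |c (i, j)|}

lemma dich (m : ℕ) (w : Fin m → Fin m → ℝ) (n : ℕ) (hn : 1 ≤ n) (v : ℝ)
    (H : ∀ E F : Finset (Fin m), E.Nonempty → F.Nonempty → F.card ≤ n * E.card →
      ∑ i ∈ E, ∑ j ∈ F, w i j ≤ v * E.card)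
    (E F : Finset (Fin m)) (hE : E.Nonempty) (hF : F.Nonempty) :
    (∃ j ∈ F, ∑ i ∈ E, w i j ≤ v / n) ∨ (∃ i ∈ E, ∑ j ∈ F, w i j ≤ v) := by
  by_contra hcon
  push_neg at hcon
  obtain ⟨hcol, hrow⟩ := hcon
  by_cases hc : F.card ≤ n * E.card
  · have h1 := H E F hE hF hc
    have h2 : v * E.card < ∑ i ∈ E, ∑ j ∈ F, w i j := by
      calc v * E.card = ∑ _i ∈ E, v := by rw [Finset.sum_const, nsmul_eq_mul]; ring
        _ < _ := Finset.sum_lt_sum_of_nonempty hE (fun i hi => hrow i hi)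
    linarith
  · push_neg at hc
    obtain ⟨F', hF'sub, hF'card⟩ := Finset.exists_subset_card_eq (le_of_lt hc)
    have hF'ne : F'.Nonempty := by
      rw [← Finset.card_pos, hF'card]
      exact Nat.mul_pos hn (Finset.card_pos.mpr hE)
    have h1 := H E F' hE hF'ne (le_of_eq hF'card)
    have hn0 : (n : ℝ) ≠ 0 := Nat.cast_ne_zero.mpr (by omega)
    have h2 : v * E.card < ∑ i ∈ E, ∑ j ∈ F', w i j := by
      rw [Finset.sum_comm]
      have hlt : ∑ _j ∈ F', (v / n) < ∑ j ∈ F', ∑ i ∈ E, w i j :=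
        Finset.sum_lt_sum_of_nonempty hF'ne (fun j hj => hcol j (hF'sub hj))
      have h3 : ∑ _j ∈ F', (v / n) = v * E.card := by
        rw [Finset.sum_const, nsmul_eq_mul, hF'card]
        push_cast
        field_simp
      linarith
    linarith

lemma mainrec (m : ℕ) (w : Fin m → Fin m → ℝ)
    (n : ℕ) (hn : 1 ≤ n) (v : ℝ) (hv : 0 ≤ v)
    (H : ∀ E F : Finset (Fin m), E.Nonempty → F.Nonempty → F.card ≤ n * E.card →
      ∑ i ∈ E, ∑ j ∈ F, w i j ≤ v * E.card) :
    ∀ N (E F : Finset (Fin m)), E.card + F.card ≤ N →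
      ∃ A B : Finset (Fin m × Fin m), Disjoint A B ∧ A ∪ B = E ×ˢ F ∧
        (∀ i, ∑ j, (if (i, j) ∈ A then w i j else 0) ≤ v) ∧
        (∀ j, ∑ i, (if (i, j) ∈ B then w i j else 0) ≤ v / n) := by
  have hvn : (0:ℝ) ≤ v / n := div_nonneg hv (Nat.cast_nonneg n)
  intro N
  induction N with
  | zero =>
    intro E F h
    have hE : E = ∅ := Finset.card_eq_zero.mp (by omega)
    exact ⟨∅, ∅, by simp, by simp [hE], fun i => by simpa using hv,
      fun j => by simpa using hvn⟩
  | succ N ih =>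
    intro E F h
    rcases E.eq_empty_or_nonempty with hE | hE
    · exact ⟨∅, ∅, by simp, by simp [hE], fun i => by simpa using hv,
        fun j => by simpa using hvn⟩
    rcases F.eq_empty_or_nonempty with hF | hF
    · exact ⟨∅, ∅, by simp, by simp [hF], fun i => by simpa using hv,
        fun j => by simpa using hvn⟩
    rcases dich m w n hn v H E F hE hF with ⟨j₀, hj₀F, hj₀⟩ | ⟨i₀, hi₀E, hi₀⟩
    · -- delete column j₀, its surviving entries go to B
      obtain ⟨A, B, hAB, hUnion, hrowA, hcolB⟩ := ih E (F.erase j₀)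
        (by have := Finset.card_erase_of_mem hj₀F
            have := Finset.card_pos.mpr hF
            omega)
      have hBsub : ∀ p ∈ B, p ∈ E ×ˢ (F.erase j₀) := by
        intro p hp
        have h2 := Finset.mem_union_right A hp
        rwa [hUnion] at h2
      have hAsub : ∀ p ∈ A, p ∈ E ×ˢ (F.erase j₀) := by
        intro p hp
        have h2 := Finset.mem_union_left B hp
        rwa [hUnion] at h2
      refine ⟨A, B ∪ E ×ˢ {j₀}, ?_, ?_, hrowA, ?_⟩
      · rw [Finset.disjoint_union_right]
        refine ⟨hAB, ?_⟩
        rw [Finset.disjoint_left]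
        intro p hp hp'
        have h1 := hAsub p hp
        rw [Finset.mem_product, Finset.mem_erase] at h1
        rw [Finset.mem_product, Finset.mem_singleton] at hp'
        exact h1.2.1 hp'.2
      · rw [← Finset.union_assoc, hUnion]
        ext ⟨i, j⟩
        simp only [Finset.mem_union, Finset.mem_product, Finset.mem_erase,
          Finset.mem_singleton]
        constructor
        · rintro (⟨h1, h2, h3⟩ | ⟨h1, h2⟩)
          · exact ⟨h1, h3⟩
          · exact ⟨h1, h2 ▸ hj₀F⟩
        · rintro ⟨h1, h2⟩
          by_cases hj : j = j₀
          · exact Or.inr ⟨h1, hj⟩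
          · exact Or.inl ⟨h1, hj, h2⟩
      · intro j
        by_cases hj : j = j₀
        · subst hj
          have hmem : ∀ i : Fin m,
              ((i, j) ∈ B ∪ E ×ˢ ({j} : Finset (Fin m))) ↔ i ∈ E := by
            intro i
            simp only [Finset.mem_union, Finset.mem_product, Finset.mem_singleton]
            constructor
            · rintro (hB | ⟨hiE, _⟩)
              · exfalso
                have h1 := hBsub _ hB
                rw [Finset.mem_product, Finset.mem_erase] at h1
                exact h1.2.1 rfl
              · exact hiE
            · exact fun hi => Or.inr ⟨hi, trivial⟩
          calc ∑ i, (if (i, j) ∈ B ∪ E ×ˢ ({j} : Finset (Fin m)) then w i j else 0)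
              = ∑ i, (if i ∈ E then w i j else 0) :=
                Finset.sum_congr rfl (fun i _ => if_congr (hmem i) rfl rfl)
            _ = ∑ i ∈ E, w i j := by
                rw [Finset.sum_ite_mem, Finset.univ_inter]
            _ ≤ v / n := hj₀
        · have hmem : ∀ i : Fin m,
              ((i, j) ∈ B ∪ E ×ˢ ({j₀} : Finset (Fin m))) ↔ (i, j) ∈ B := by
            intro i
            simp only [Finset.mem_union, Finset.mem_product, Finset.mem_singleton]
            constructor
            · rintro (hB | ⟨_, hjj⟩)
              · exact hB
              · exact absurd hjj hj
            · exact Or.inl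
          calc ∑ i, (if (i, j) ∈ B ∪ E ×ˢ ({j₀} : Finset (Fin m)) then w i j else 0)
              = ∑ i, (if (i, j) ∈ B then w i j else 0) :=
                Finset.sum_congr rfl (fun i _ => if_congr (hmem i) rfl rfl)
            _ ≤ v / n := hcolB j
    · -- delete row i₀, its surviving entries go to A
      obtain ⟨A, B, hAB, hUnion, hrowA, hcolB⟩ := ih (E.erase i₀) F
        (by have := Finset.card_erase_of_mem hi₀E
            have := Finset.card_pos.mpr hE
            omega)
      have hBsub : ∀ p ∈ B, p ∈ (E.erase i₀) ×ˢ F := by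
        intro p hp
        have h2 := Finset.mem_union_right A hp
        rwa [hUnion] at h2
      have hAsub : ∀ p ∈ A, p ∈ (E.erase i₀) ×ˢ F := by
        intro p hp
        have h2 := Finset.mem_union_left B hp
        rwa [hUnion] at h2
      refine ⟨A ∪ {i₀} ×ˢ F, B, ?_, ?_, ?_, hcolB⟩
      · rw [Finset.disjoint_union_left]
        refine ⟨hAB, ?_⟩
        rw [Finset.disjoint_left]
        intro p hp hp'
        have h1 := hBsub p hp'
        rw [Finset.mem_product, Finset.mem_erase] at h1
        rw [Finset.mem_product, Finset.mem_singleton] at hp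
        exact h1.1.1 (hp.1 ▸ rfl)
      · rw [Finset.union_right_comm, hUnion]
        ext ⟨i, j⟩
        simp only [Finset.mem_union, Finset.mem_product, Finset.mem_erase,
          Finset.mem_singleton]
        constructor
        · rintro (⟨⟨h1, h2⟩, h3⟩ | ⟨h1, h2⟩)
          · exact ⟨h2, h3⟩
          · exact ⟨h1 ▸ hi₀E, h2⟩
        · rintro ⟨h1, h2⟩
          by_cases hi : i = i₀
          · exact Or.inr ⟨hi, h2⟩
          · exact Or.inl ⟨⟨hi, h1⟩, h2⟩
      · intro i
        by_cases hi : i = i₀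
        · subst hi
          have hmem : ∀ j : Fin m,
              ((i, j) ∈ A ∪ ({i} : Finset (Fin m)) ×ˢ F) ↔ j ∈ F := by
            intro j
            simp only [Finset.mem_union, Finset.mem_product, Finset.mem_singleton]
            constructor
            · rintro (hA | ⟨_, hjF⟩)
              · exfalso
                have h1 := hAsub _ hA
                rw [Finset.mem_product, Finset.mem_erase] at h1
                exact h1.1.1 rfl
              · exact hjF
            · exact fun hj => Or.inr ⟨trivial, hj⟩
          calc ∑ j, (if (i, j) ∈ A ∪ ({i} : Finset (Fin m)) ×ˢ F then w i j else 0)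
              = ∑ j, (if j ∈ F then w i j else 0) :=
                Finset.sum_congr rfl (fun j _ => if_congr (hmem j) rfl rfl)
            _ = ∑ j ∈ F, w i j := by
                rw [Finset.sum_ite_mem, Finset.univ_inter]
            _ ≤ v := hi₀
        · have hmem : ∀ j : Fin m,
              ((i, j) ∈ A ∪ ({i₀} : Finset (Fin m)) ×ˢ F) ↔ (i, j) ∈ A := by
            intro j
            simp only [Finset.mem_union, Finset.mem_product, Finset.mem_singleton]
            constructor
            · rintro (hA | ⟨hii, _⟩)
              · exact hA
              · exact absurd hii hi
            · exact Or.inl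
          calc ∑ j, (if (i, j) ∈ A ∪ ({i₀} : Finset (Fin m)) ×ˢ F then w i j else 0)
              = ∑ j, (if (i, j) ∈ A then w i j else 0) :=
                Finset.sum_congr rfl (fun j _ => if_congr (hmem j) rfl rfl)
            _ ≤ v := hrowA i

lemma varSet_bddAbove (m : ℕ) (t : ℝ) (a : Fin m × Fin m → ℝ) :
    BddAbove {x : ℝ | ∃ E F : Finset (Fin m), E.Nonempty ∧ F.Nonempty ∧
      t⁻¹ * (F.card : ℝ) ≤ (E.card : ℝ) ∧
      x = ((E.card : ℝ))⁻¹ * ∑ i ∈ E, ∑ j ∈ F, |a (i, j)|} := by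
  refine ⟨∑ i : Fin m, ∑ j : Fin m, |a (i, j)|, ?_⟩
  rintro x ⟨E, F, hE, hF, _, rfl⟩
  have hinner : ∀ i, ∑ j ∈ F, |a (i, j)| ≤ ∑ j : Fin m, |a (i, j)| := fun i =>
    Finset.sum_le_sum_of_subset_of_nonneg (Finset.subset_univ F)
      (fun j _ _ => abs_nonneg _)
  have h1 : ∑ i ∈ E, ∑ j ∈ F, |a (i, j)| ≤ ∑ i ∈ E, ∑ j : Fin m, |a (i, j)| :=
    Finset.sum_le_sum (fun i _ => hinner i)
  have h2 : ∑ i ∈ E, ∑ j : Fin m, |a (i, j)|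
      ≤ ∑ i : Fin m, ∑ j : Fin m, |a (i, j)| :=
    Finset.sum_le_sum_of_subset_of_nonneg (Finset.subset_univ E)
      (fun i _ _ => Finset.sum_nonneg (fun j _ => abs_nonneg _))
  have hS : (0:ℝ) ≤ ∑ i ∈ E, ∑ j ∈ F, |a (i, j)| :=
    Finset.sum_nonneg (fun i _ => Finset.sum_nonneg (fun j _ => abs_nonneg _))
  have hc1 : (1:ℝ) ≤ (E.card : ℝ) := by
    exact_mod_cast Nat.one_le_iff_ne_zero.mpr (Finset.card_ne_zero_of_mem hE.choose_spec)
  have hinv : ((E.card : ℝ))⁻¹ ≤ 1 := inv_le_one_of_one_le₀ hc1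
  calc ((E.card : ℝ))⁻¹ * ∑ i ∈ E, ∑ j ∈ F, |a (i, j)|
      ≤ 1 * ∑ i ∈ E, ∑ j ∈ F, |a (i, j)| := mul_le_mul_of_nonneg_right hinv hS
    _ = ∑ i ∈ E, ∑ j ∈ F, |a (i, j)| := one_mul _
    _ ≤ _ := le_trans h1 h2

lemma varNorm_nonneg (m : ℕ) (t : ℝ) (a : Fin m × Fin m → ℝ) :
    0 ≤ varNorm m t a := by
  apply Real.sSup_nonneg
  rintro x ⟨E, F, hE, hF, _, rfl⟩
  have hS : (0:ℝ) ≤ ∑ i ∈ E, ∑ j ∈ F, |a (i, j)| :=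
    Finset.sum_nonneg (fun i _ => Finset.sum_nonneg (fun j _ => abs_nonneg _))
  positivity

lemma Hfromvar (m : ℕ) (t : ℝ) (ht : 1 ≤ t) (a : Fin m × Fin m → ℝ) :
    ∀ E F : Finset (Fin m), E.Nonempty → F.Nonempty →
      F.card ≤ (Nat.floor t) * E.card →
      ∑ i ∈ E, ∑ j ∈ F, |a (i, j)| ≤ varNorm m t a * E.card := by
  intro E F hE hF hcard
  have ht0 : (0:ℝ) < t := lt_of_lt_of_le one_pos ht
  have hcond : t⁻¹ * (F.card : ℝ) ≤ (E.card : ℝ) := by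
    have h1 : (F.card : ℝ) ≤ (Nat.floor t : ℝ) * E.card := by exact_mod_cast hcard
    have h2 : (Nat.floor t : ℝ) ≤ t := Nat.floor_le (le_of_lt ht0)
    have h3 : (F.card : ℝ) ≤ t * E.card :=
      le_trans h1 (mul_le_mul_of_nonneg_right h2 (Nat.cast_nonneg _))
    calc t⁻¹ * (F.card : ℝ) ≤ t⁻¹ * (t * E.card) :=
          mul_le_mul_of_nonneg_left h3 (by positivity)
      _ = E.card := by field_simp
  have hmem : ((E.card : ℝ))⁻¹ * ∑ i ∈ E, ∑ j ∈ F, |a (i, j)| ∈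
      {x : ℝ | ∃ E F : Finset (Fin m), E.Nonempty ∧ F.Nonempty ∧
        t⁻¹ * (F.card : ℝ) ≤ (E.card : ℝ) ∧
        x = ((E.card : ℝ))⁻¹ * ∑ i ∈ E, ∑ j ∈ F, |a (i, j)|} :=
    ⟨E, F, hE, hF, hcond, rfl⟩
  have hle : ((E.card : ℝ))⁻¹ * ∑ i ∈ E, ∑ j ∈ F, |a (i, j)| ≤ varNorm m t a :=
    le_csSup (varSet_bddAbove m t a) hmem
  have hEc : (0:ℝ) < (E.card : ℝ) := by
    exact_mod_cast Finset.card_pos.mpr hE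
  calc ∑ i ∈ E, ∑ j ∈ F, |a (i, j)|
      = (E.card : ℝ) * (((E.card : ℝ))⁻¹ * ∑ i ∈ E, ∑ j ∈ F, |a (i, j)|) := by
        field_simp
    _ ≤ (E.card : ℝ) * varNorm m t a := mul_le_mul_of_nonneg_left hle (le_of_lt hEc)
    _ = varNorm m t a * E.card := mul_comm _ _

/-- Remark 1.2; discrete Varopoulos lemma: if `t ≥ 1` and
`⦀a⦀_t ≤ 1`, then `M × M` splits into `A ∪ B` with row sums of `1_A·a` at most `1`
and column sums of `1_B·a` at most `1/⌊t⌋`; consequently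
`K_t(a) ≤ (1 + t/⌊t⌋) ⦀a⦀_t` where the constant `1 + t/⌊t⌋` is `< 3`. -/
theorem varopoulos_lemma (m : ℕ) (t : ℝ) (ht : 1 ≤ t) (a : Fin m × Fin m → ℝ)
    (ha : varNorm m t a ≤ 1) :
    (∃ A B : Finset (Fin m × Fin m), Disjoint A B ∧ A ∪ B = Finset.univ ∧
      (∀ i : Fin m, ∑ j : Fin m, (if (i, j) ∈ A then |a (i, j)| else 0) ≤ 1) ∧
      (∀ j : Fin m, ∑ i : Fin m, (if (i, j) ∈ B then |a (i, j)| else 0) ≤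
        1 / (Nat.floor t : ℝ))) ∧
    KtCount m t a ≤ (1 + t / (Nat.floor t : ℝ)) * varNorm m t a ∧
    1 + t / (Nat.floor t : ℝ) < 3 := by
  have ht0 : (0:ℝ) < t := lt_of_lt_of_le one_pos ht
  have hn1 : 1 ≤ Nat.floor t := Nat.floor_pos.mpr ht
  have hnr : (1:ℝ) ≤ (Nat.floor t : ℝ) := by exact_mod_cast hn1
  have hnr0 : (0:ℝ) < (Nat.floor t : ℝ) := lt_of_lt_of_le one_pos hnr
  have hlt : t < (Nat.floor t : ℝ) + 1 := Nat.lt_floor_add_one t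
  have hv0 : 0 ≤ varNorm m t a := varNorm_nonneg m t a
  refine ⟨?_, ?_, ?_⟩
  · -- Part 1
    have H1 : ∀ E F : Finset (Fin m), E.Nonempty → F.Nonempty →
        F.card ≤ (Nat.floor t) * E.card →
        ∑ i ∈ E, ∑ j ∈ F, |a (i, j)| ≤ 1 * E.card := by
      intro E F hE hF hc
      calc ∑ i ∈ E, ∑ j ∈ F, |a (i, j)| ≤ varNorm m t a * E.card :=
            Hfromvar m t ht a E F hE hF hc
        _ ≤ 1 * E.card := mul_le_mul_of_nonneg_right ha (Nat.cast_nonneg _)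
    obtain ⟨A, B, hAB, hUnion, hrow, hcol⟩ :=
      mainrec m (fun i j => |a (i, j)|) (Nat.floor t) hn1 1 zero_le_one H1
        ((univ : Finset (Fin m)).card + (univ : Finset (Fin m)).card)
        univ univ le_rfl
    refine ⟨A, B, hAB, ?_, hrow, hcol⟩
    rw [hUnion, Finset.univ_product_univ]
  · -- Part 2
    obtain ⟨A, B, hAB, hUnion, hrow, hcol⟩ :=
      mainrec m (fun i j => |a (i, j)|) (Nat.floor t) hn1 (varNorm m t a) hv0
        (Hfromvar m t ht a)
        ((univ : Finset (Fin m)).card + (univ : Finset (Fin m)).card)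
        univ univ le_rfl
    have hABuniv : A ∪ B = (univ : Finset (Fin m × Fin m)) := by
      rw [hUnion, Finset.univ_product_univ]
    set b : Fin m × Fin m → ℝ := fun p => if p ∈ A then a p else 0 with hb
    set c : Fin m × Fin m → ℝ := fun p => if p ∈ B then a p else 0 with hc
    have hbc : a = b + c := by
      funext p
      have hp : p ∈ A ∪ B := hABuniv ▸ Finset.mem_univ p
      rw [Finset.mem_union] at hp
      simp only [hb, hc, Pi.add_apply]
      rcases hp with hp | hp
      · have hnB : p ∉ B := Finset.disjoint_left.mp hAB hp
        rw [if_pos hp, if_neg hnB, add_zero]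
      · have hnA : p ∉ A := Finset.disjoint_right.mp hAB hp
        rw [if_neg hnA, if_pos hp, zero_add]
    have habs : ∀ (S : Finset (Fin m × Fin m)) (p : Fin m × Fin m),
        |if p ∈ S then a p else 0| = if p ∈ S then |a p| else 0 := by
      intro S p; split <;> simp
    have hmem : (⨆ i : Fin m, ∑ j : Fin m, |b (i, j)|) +
        t * ⨆ j : Fin m, ∑ i : Fin m, |c (i, j)| ∈
        {x : ℝ | ∃ b c : Fin m × Fin m → ℝ, a = b + c ∧
          x = (⨆ i : Fin m, ∑ j : Fin m, |b (i, j)|) +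
            t * ⨆ j : Fin m, ∑ i : Fin m, |c (i, j)|} :=
      ⟨b, c, hbc, rfl⟩
    have hbdd : BddBelow {x : ℝ | ∃ b c : Fin m × Fin m → ℝ, a = b + c ∧
        x = (⨆ i : Fin m, ∑ j : Fin m, |b (i, j)|) +
          t * ⨆ j : Fin m, ∑ i : Fin m, |c (i, j)|} := by
      refine ⟨0, ?_⟩
      rintro x ⟨b', c', _, rfl⟩
      have h1 : 0 ≤ ⨆ i : Fin m, ∑ j : Fin m, |b' (i, j)| :=
        Real.iSup_nonneg (fun i => Finset.sum_nonneg (fun j _ => abs_nonneg _))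
      have h2 : 0 ≤ ⨆ j : Fin m, ∑ i : Fin m, |c' (i, j)| :=
        Real.iSup_nonneg (fun j => Finset.sum_nonneg (fun i _ => abs_nonneg _))
      have := mul_nonneg (le_of_lt ht0) h2
      linarith
    have hKt := csInf_le hbdd hmem
    have hs1 : (⨆ i : Fin m, ∑ j : Fin m, |b (i, j)|) ≤ varNorm m t a := by
      apply Real.iSup_le _ hv0
      intro i
      have heq : ∑ j : Fin m, |b (i, j)| =
          ∑ j : Fin m, (if (i, j) ∈ A then |a (i, j)| else 0) :=
        Finset.sum_congr rfl (fun j _ => habs A (i, j))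
      rw [heq]; exact hrow i
    have hs2 : (⨆ j : Fin m, ∑ i : Fin m, |c (i, j)|) ≤
        varNorm m t a / (Nat.floor t : ℝ) := by
      apply Real.iSup_le _ (div_nonneg hv0 (le_of_lt hnr0))
      intro j
      have heq : ∑ i : Fin m, |c (i, j)| =
          ∑ i : Fin m, (if (i, j) ∈ B then |a (i, j)| else 0) :=
        Finset.sum_congr rfl (fun i _ => habs B (i, j))
      rw [heq]; exact hcol j
    calc KtCount m t a ≤ (⨆ i : Fin m, ∑ j : Fin m, |b (i, j)|) +
          t * ⨆ j : Fin m, ∑ i : Fin m, |c (i, j)| := hKt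
      _ ≤ varNorm m t a + t * (varNorm m t a / (Nat.floor t : ℝ)) := by
          have := mul_le_mul_of_nonneg_left hs2 (le_of_lt ht0)
          linarith
      _ = (1 + t / (Nat.floor t : ℝ)) * varNorm m t a := by ring
  · -- Part 3
    have h2 : t / (Nat.floor t : ℝ) < 2 := by
      rw [div_lt_iff₀ hnr0]
      nlinarith
    linarith
end
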